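/- arXiv:1510.00306 — 6 statements merged into one kernel-verified Lean document; each statement's English description precedes it below -/
import Mathlib

section
/- Let A be a unital Banach algebra, t > 1, and x ∈ A with ‖1 − tx‖ ≤ 1 and ‖1 − x‖ = 1. Then every norm-one functional f on A with f(1 − x) = 1 satisfies f(1) = 1, i.e., f is a state. -/
/-- a norm-one functional achieving its norm at 1 − x is a state,
given ‖1 − tx‖ ≤ 1 for some t > 1 and ‖1 − x‖ = 1. -/
theorem stmt7 {A : Type*} [NormedRing A] [NormedAlgebra ℂ A] [NormOneClass A]
    (t : ℝ) (ht : 1 < t) (x : A)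
    (h1 : ‖1 - (t : ℂ) • x‖ ≤ 1) (h2 : ‖1 - x‖ = 1)
    (f : A →L[ℂ] ℂ) (hf : ‖f‖ = 1) (hfx : f (1 - x) = 1) :
    f 1 = 1 := by
  set z : ℂ := f 1 with hz
  have hzx : f x = z - 1 := by
    have : f 1 - f x = 1 := by rw [← map_sub]; exact hfx
    linear_combination -this
  -- |z| ≤ 1
  have habs : ‖z‖ ≤ 1 := by
    have := f.le_opNorm 1
    simpa [hf, hz] using this
  -- |t - (t-1) z| ≤ 1
  have hval : f (1 - (t : ℂ) • x) = (t : ℂ) - ((t : ℂ) - 1) * z := by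
    rw [map_sub, map_smul, hzx]
    push_cast
    ring_nf
    simp [hz]
  have habs2 : ‖(t : ℂ) - ((t : ℂ) - 1) * z‖ ≤ 1 := by
    have := f.le_opNorm (1 - (t : ℂ) • x)
    rw [hval] at this
    calc ‖(t : ℂ) - ((t : ℂ) - 1) * z‖ ≤ ‖f‖ * ‖1 - (t : ℂ) • x‖ := this
    _ ≤ 1 := by rw [hf]; simpa using h1
  -- real part bound
  have hre : 1 ≤ z.re := by
    have hRe : ((t : ℂ) - ((t : ℂ) - 1) * z).re = t - (t - 1) * z.re := by
      simp [Complex.sub_re, Complex.mul_re]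
    have h3 : t - (t - 1) * z.re ≤ 1 := by
      calc t - (t - 1) * z.re = ((t : ℂ) - ((t : ℂ) - 1) * z).re := hRe.symm
      _ ≤ ‖(t : ℂ) - ((t : ℂ) - 1) * z‖ := Complex.re_le_norm _
      _ ≤ 1 := habs2
    nlinarith
  have hre2 : z.re ≤ 1 := le_trans (Complex.re_le_norm z) habs
  have hre3 : z.re = 1 := le_antisymm hre2 hre
  have him : z.im = 0 := by
    have := Complex.sq_norm z
    rw [Complex.normSq_apply, hre3] at this
    nlinarith [norm_nonneg z]
  rw [hz] at *
  exact Complex.ext hre3 him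
end

section
/- Let A be a unital Banach algebra and x ∈ A with ‖1 − tx‖ ≤ 1 for some t > 1, and suppose 0 ∉ W(x) (i.e., no state of A vanishes at x). Then ‖1 − x‖ < 1. -/
/-- if ‖1 − tx‖ ≤ 1 for some t > 1 and no state vanishes at x,
then ‖1 − x‖ < 1. -/
theorem stmt8 {A : Type*} [NormedRing A] [NormedAlgebra ℂ A] [NormOneClass A]
    (x : A) (h : ∃ t : ℝ, 1 < t ∧ ‖1 - (t : ℂ) • x‖ ≤ 1)
    (h0 : ∀ φ : A →L[ℂ] ℂ, ‖φ‖ = 1 → φ 1 = 1 → φ x ≠ 0) :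
    ‖1 - x‖ < 1 := by
  obtain ⟨t, ht, htx⟩ := h
  have ht0 : (0:ℝ) < t := by linarith
  have hs0 : (0:ℝ) < t⁻¹ := by positivity
  have hs1 : t⁻¹ < 1 := by
    rw [inv_lt_one_iff₀]; right; exact ht
  have htne : (t:ℂ) ≠ 0 := by exact_mod_cast ht0.ne'
  have hdecomp : (1 : A) - x =
      ((1 - t⁻¹ : ℝ) : ℂ) • (1:A) + ((t⁻¹ : ℝ) : ℂ) • ((1:A) - (t:ℂ) • x) := by
    push_cast
    rw [smul_sub, smul_smul, inv_mul_cancel₀ htne, sub_smul, one_smul, one_smul]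
    abel
  have hle : ‖(1:A) - x‖ ≤ 1 := by
    calc ‖(1:A) - x‖ ≤ ‖((1 - t⁻¹ : ℝ) : ℂ) • (1:A)‖ +
          ‖((t⁻¹ : ℝ) : ℂ) • ((1:A) - (t:ℂ) • x)‖ := by
          rw [hdecomp]; exact norm_add_le _ _
      _ = |1 - t⁻¹| * ‖(1:A)‖ + |t⁻¹| * ‖(1:A) - (t:ℂ) • x‖ := by
          rw [norm_smul, norm_smul, Complex.norm_real, Complex.norm_real,
            Real.norm_eq_abs, Real.norm_eq_abs]
      _ ≤ (1 - t⁻¹) * 1 + t⁻¹ * 1 := by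
          rw [norm_one, abs_of_nonneg (by linarith), abs_of_nonneg hs0.le]
          have h2 : t⁻¹ * ‖(1:A) - (t:ℂ) • x‖ ≤ t⁻¹ * 1 :=
            mul_le_mul_of_nonneg_left htx hs0.le
          linarith
      _ = 1 := by ring
  by_contra hc
  have heq : ‖(1:A) - x‖ = 1 := le_antisymm hle (not_lt.mp hc)
  have hne : (1:A) - x ≠ 0 := by
    intro h'; rw [h', norm_zero] at heq; norm_num at heq
  obtain ⟨φ, hφn, hφv⟩ := exists_dual_vector ℂ ((1:A) - x) (norm_ne_zero_iff.mpr hne)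
  rw [heq] at hφv
  norm_num at hφv
  -- bounds on real parts
  have hb1 : (φ 1).re ≤ 1 := by
    have : ‖φ 1‖ ≤ ‖φ‖ * ‖(1:A)‖ := φ.le_opNorm 1
    rw [hφn, norm_one, one_mul] at this
    calc (φ 1).re ≤ ‖φ 1‖ := Complex.re_le_norm _
      _ ≤ 1 := this
  have hb2 : (φ ((1:A) - (t:ℂ) • x)).re ≤ 1 := by
    have : ‖φ ((1:A) - (t:ℂ) • x)‖ ≤ ‖φ‖ * ‖(1:A) - (t:ℂ) • x‖ := φ.le_opNorm _
    rw [hφn, one_mul] at this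
    calc (φ ((1:A) - (t:ℂ) • x)).re ≤ ‖φ ((1:A) - (t:ℂ) • x)‖ := Complex.re_le_norm _
      _ ≤ 1 := le_trans this htx
  have hcomb : (1:ℂ) = ((1 - t⁻¹ : ℝ) : ℂ) * φ 1 +
      ((t⁻¹ : ℝ) : ℂ) * φ ((1:A) - (t:ℂ) • x) := by
    have h' := congrArg φ hdecomp
    rw [map_sub, map_add, map_smul, map_smul, smul_eq_mul, smul_eq_mul] at h'
    rw [← h', hφv]
  have hre : (1:ℝ) = (1 - t⁻¹) * (φ 1).re + t⁻¹ * (φ ((1:A) - (t:ℂ) • x)).re := by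
    have := congrArg Complex.re hcomb
    simpa [Complex.add_re, Complex.re_ofReal_mul] using this
  have hre1 : (φ 1).re = 1 := by nlinarith
  have hφ1 : φ 1 = 1 := by
    have habs : ‖φ 1‖ ≤ 1 := by
      have := φ.le_opNorm (1:A)
      rwa [hφn, norm_one, one_mul] at this
    have hsq : (φ 1).re ^ 2 + (φ 1).im ^ 2 ≤ 1 := by
      have h1 : ‖φ 1‖ ≤ 1 := habs
      have h2 : (‖φ 1‖)^2 = (φ 1).re ^ 2 + (φ 1).im ^ 2 := by
        rw [Complex.sq_norm, Complex.normSq_apply]; ring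
      nlinarith [norm_nonneg (φ 1)]
    have him : (φ 1).im = 0 := by nlinarith
    apply Complex.ext <;> simp [hre1, him]
  have hφx : φ x = 0 := by
    linear_combination hφ1 - hφv
  exact h0 φ hφn hφ1 hφx
end

section
/- Let a ∈ A be invertible in a unital Banach algebra with Sp(a) ∩ iℝ = ∅, and let S = sign(a), N = (a²)^{1/2}, G₀ = (N−1)(N+1)^{-1}. Define the Newton iterates X₀ = a, X_{k+1} = (X_k + X_k^{-1})/2. Then each X_k is invertible, X_k = (1 − G₀^{2^k})^{-1}(1 + G₀^{2^k})·S for all k ≥ 1, and X_k → S and X_k^{-1} → S in norm; moreover ‖X_{k+1} − S‖ ≤ (1/2)‖X_k^{-1}‖·‖X_k − S‖². -/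
open Filter

lemma aux_mulswap {M : Type*} [Semigroup M] {x y : M} (h : x * y = y * x) (z : M) :
    x * (y * z) = y * (x * z) := by rw [← mul_assoc, h, mul_assoc]

lemma aux_tendsto_pow {A : Type*} [NormedRing A] [NormedAlgebra ℂ A] [CompleteSpace A]
    {x : A} (h : spectralRadius ℂ x < 1) :
    Tendsto (fun n : ℕ => x ^ n) atTop (nhds 0) := by
  obtain ⟨r, hr0, hr1⟩ := ENNReal.lt_iff_exists_nnreal_btwn.mp h
  have hgel := spectrum.pow_nnnorm_pow_one_div_tendsto_nhds_spectralRadius x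
  have hev : ∀ᶠ n : ℕ in atTop, (‖x ^ n‖₊ : ENNReal) ^ (1/(n:ℝ)) < (r : ENNReal) :=
    hgel.eventually_lt_const hr0
  have hev2 : ∀ᶠ n : ℕ in atTop, ‖x ^ n‖ ≤ (r:ℝ)^n := by
    filter_upwards [hev, eventually_ge_atTop 1] with n hn hn1
    have hn0 : (n:ℝ) ≠ 0 := Nat.cast_ne_zero.mpr (by omega)
    have h2 := ENNReal.rpow_lt_rpow hn (by positivity : (0:ℝ) < (n:ℝ))
    rw [← ENNReal.rpow_mul, one_div, inv_mul_cancel₀ hn0, ENNReal.rpow_one,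
      ENNReal.rpow_natCast, ← ENNReal.coe_pow, ENNReal.coe_lt_coe] at h2
    have h3 : ‖x ^ n‖₊ ≤ r ^ n := h2.le
    calc ‖x ^ n‖ = ((‖x ^ n‖₊ : ℝ)) := rfl
    _ ≤ ((r ^ n : NNReal) : ℝ) := by exact_mod_cast h3
    _ = (r:ℝ)^n := by push_cast; ring
  refine squeeze_zero_norm' hev2 ?_
  refine tendsto_pow_atTop_nhds_zero_of_lt_one r.coe_nonneg ?_
  exact_mod_cast hr1

lemma aux_spec_lt_one {A : Type*} [NormedRing A] [NormedAlgebra ℂ A]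
    (N : Aˣ) (hNspec : ∀ z ∈ spectrum ℂ (N : A), 0 < z.re) (hN1 : IsUnit ((N : A) + 1)) :
    ∀ z ∈ spectrum ℂ (((N : A) - 1) * Ring.inverse ((N : A) + 1)), ‖z‖ < 1 := by
  set u1 := hN1.unit with hu1def
  have hu1 : (u1 : A) = (N : A) + 1 := hN1.unit_spec
  have hGdef : ((N : A) - 1) * Ring.inverse ((N : A) + 1) = ((N : A) - 1) * ↑u1⁻¹ := by
    rw [← hu1, Ring.inverse_unit]
  rw [hGdef]
  set G : A := ((N : A) - 1) * ↑u1⁻¹ with hG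
  have hGu1 : G * ↑u1 = (N : A) - 1 := by
    rw [hG, mul_assoc, Units.inv_mul, mul_one]
  have h2unit : IsUnit (2 : A) := by
    have := (isUnit_iff_ne_zero.mpr (two_ne_zero : (2:ℂ) ≠ 0)).map (algebraMap ℂ A)
    simpa [map_ofNat] using this
  have hone : IsUnit ((1 : A) - G) := by
    have he : ((1 : A) - G) * ↑u1 = 2 := by
      rw [sub_mul, one_mul, hGu1, hu1]; noncomm_ring; simp [two_smul]; norm_num
    have he2 : (1 : A) - G = 2 * ↑u1⁻¹ := by
      rw [← he, mul_assoc, Units.mul_inv, mul_one]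
    rw [he2]
    exact h2unit.mul u1⁻¹.isUnit
  intro z hz
  have hz1 : z ≠ 1 := by
    rintro rfl
    rw [spectrum.mem_iff] at hz
    exact hz (by simpa using hone)
  have hzsub : (1 : ℂ) - z ≠ 0 := sub_ne_zero.mpr (Ne.symm hz1)
  set w : ℂ := (1 + z) / (1 - z) with hwdef
  have hw1 : (1 - z) * w = 1 + z := by
    rw [hwdef, mul_div_cancel₀ _ hzsub]
  have hw : w ∈ spectrum ℂ (N : A) := by
    by_contra hw
    rw [spectrum.mem_iff] at hz
    apply hz
    rw [spectrum.notMem_iff] at hw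
    have key : (algebraMap ℂ A z - G) * ↑u1 = (1 - z) • (algebraMap ℂ A w - N) := by
      rw [Algebra.algebraMap_eq_smul_one, Algebra.algebraMap_eq_smul_one,
        sub_mul, smul_mul_assoc, one_mul, hGu1, hu1, smul_sub, smul_smul, hw1]
      module
    have h5 : algebraMap ℂ A z - G = ((1 - z) • (algebraMap ℂ A w - N)) * ↑u1⁻¹ := by
      rw [← key, mul_assoc, Units.mul_inv, mul_one]
    rw [h5]
    refine IsUnit.mul ?_ u1⁻¹.isUnit
    rw [Algebra.smul_def]
    exact ((isUnit_iff_ne_zero.mpr hzsub).map (algebraMap ℂ A)).mul hw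
  have hwre : 0 < w.re := hNspec w hw
  have h2 : 0 < Complex.normSq (1 - z) := Complex.normSq_pos.mpr hzsub
  rw [hwdef, Complex.div_re] at hwre
  simp only [Complex.add_re, Complex.one_re, Complex.sub_re, Complex.add_im,
    Complex.sub_im, Complex.one_im] at hwre
  have hnum : 0 < (1 + z.re) * (1 - z.re) + (0 + z.im) * (0 - z.im) := by
    rw [← add_div, div_pos_iff] at hwre
    rcases hwre with ⟨h, _⟩ | ⟨_, h⟩
    · exact h
    · linarith
  have h4 : ‖z‖ ^ 2 = z.re ^ 2 + z.im ^ 2 := by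
    rw [Complex.sq_norm, Complex.normSq_apply]; ring
  nlinarith [norm_nonneg z]


/-- the Newton iteration X₀ = a, X_{k+1} = (X_k + X_k⁻¹)/2 is well defined
(each iterate invertible), has the closed form X_k = (1 − G₀^{2^k})^{-1}(1 + G₀^{2^k})·S
for k ≥ 1, converges (together with the inverses) to S = sign(a), and satisfies the
quadratic error bound. Here N is the principal square root of a², S = a·N⁻¹,
and G₀ = (N−1)(N+1)^{-1}. -/
theorem stmt13 {A : Type*} [NormedRing A] [NormedAlgebra ℂ A] [CompleteSpace A] [NormOneClass A]
    (a : Aˣ) (ha : ∀ y : ℝ, (Complex.I * (y : ℂ)) ∉ spectrum ℂ (a : A))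
    (N : Aˣ) (hN2 : (N : A) * N = (a : A) * a) (hcomm : (a : A) * N = (N : A) * a)
    (hNspec : ∀ z ∈ spectrum ℂ (N : A), 0 < z.re) (hN1 : IsUnit ((N : A) + 1)) :
    let S : A := (a : A) * (↑N⁻¹ : A)
    let G : A := ((N : A) - 1) * Ring.inverse ((N : A) + 1)
    ∃ X : ℕ → A, X 0 = (a : A) ∧ (∀ k, IsUnit (X k)) ∧
      (∀ k, X (k + 1) = (2 : ℂ)⁻¹ • (X k + Ring.inverse (X k))) ∧
      (∀ k, 1 ≤ k → IsUnit (1 - G ^ (2 ^ k)) ∧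
        X k = Ring.inverse (1 - G ^ (2 ^ k)) * (1 + G ^ (2 ^ k)) * S) ∧
      Filter.Tendsto X atTop (nhds S) ∧
      Filter.Tendsto (fun k => Ring.inverse (X k)) atTop (nhds S) ∧
      (∀ k, ‖X (k + 1) - S‖ ≤ (2 : ℝ)⁻¹ * ‖Ring.inverse (X k)‖ * ‖X k - S‖ ^ 2) := by
  intro S G
  have hS : S = (a : A) * (↑N⁻¹ : A) := rfl
  have hG : G = ((N : A) - 1) * Ring.inverse ((N : A) + 1) := rfl
  haveI : Nontrivial A := nontrivial_of_ne 1 0 fun h => by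
    simpa [h] using (norm_one : ‖(1:A)‖ = 1)
  -- spectral facts
  have hspecG : ∀ z ∈ spectrum ℂ G, ‖z‖ < 1 := fun z hz =>
    aux_spec_lt_one N hNspec hN1 z (hG ▸ hz)
  have hsr : spectralRadius ℂ G < 1 := by
    have h1 := spectrum.spectralRadius_lt_of_forall_lt (a := G) (r := 1)
      (fun z hz => by
        rw [← NNReal.coe_lt_coe]
        simpa using hspecG z hz)
    simpa using h1
  have hpow : ∀ m : ℕ, m ≠ 0 → ∀ z ∈ spectrum ℂ (G ^ m), ‖z‖ < 1 := by
    intro m hm z hz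
    rw [spectrum.map_pow] at hz
    obtain ⟨w, hw, rfl⟩ := hz
    rw [norm_pow]
    exact pow_lt_one₀ (norm_nonneg w) (hspecG w hw) hm
  have hU1 : ∀ k : ℕ, IsUnit ((1:A) - G ^ (2^k)) := by
    intro k
    have h1 : (1:ℂ) ∉ spectrum ℂ (G ^ (2^k)) := fun h => by
      simpa using hpow (2^k) (by positivity) 1 h
    rw [spectrum.notMem_iff] at h1
    simpa using h1
  have hV1 : ∀ k : ℕ, IsUnit ((1:A) + G ^ (2^k)) := by
    intro k
    have h1 : (-1:ℂ) ∉ spectrum ℂ (G ^ (2^k)) := fun h => by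
      simpa using hpow (2^k) (by positivity) (-1) h
    rw [spectrum.notMem_iff] at h1
    have h2 : (algebraMap ℂ A (-1) - G ^ (2^k)) = -((1:A) + G ^ (2^k)) := by
      rw [map_neg, map_one]; noncomm_ring
    rw [h2] at h1
    exact (IsUnit.neg_iff _).mp h1
  -- commutation and S facts
  have hCaN : Commute (a:A) (N:A) := hcomm
  have hCaNi : Commute (a:A) ((↑N⁻¹:A)) := hCaN.units_inv_right
  have hNS : (N:A) * S = (a:A) := by
    rw [hS, ← mul_assoc, ← hcomm, mul_assoc, Units.mul_inv, mul_one]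
  have hSN : S * (N:A) = (a:A) := by
    rw [hS, mul_assoc, Units.inv_mul, mul_one]
  have hCSN : Commute S (N:A) := by
    show S * (N:A) = (N:A) * S
    rw [hSN, hNS]
  have hSS : S * S = 1 := by
    rw [hS]
    calc (a:A) * ↑N⁻¹ * ((a:A) * ↑N⁻¹)
        = (a:A) * ((↑N⁻¹:A) * ((a:A) * ↑N⁻¹)) := by rw [mul_assoc]
      _ = (a:A) * ((a:A) * ((↑N⁻¹:A) * ↑N⁻¹)) := by rw [aux_mulswap hCaNi.symm.eq]
      _ = ((a:A) * (a:A)) * ((↑N⁻¹:A) * ↑N⁻¹) := by rw [← mul_assoc]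
      _ = ((N:A) * (N:A)) * ((↑N⁻¹:A) * ↑N⁻¹) := by rw [hN2]
      _ = 1 := by
          rw [mul_assoc, ← mul_assoc (N:A) (↑N⁻¹:A), Units.mul_inv, one_mul, Units.mul_inv]
  let Su : Aˣ := ⟨S, S, hSS, hSS⟩
  have hSu : ((Su : Aˣ) : A) = S := rfl
  have hSui : ((Su⁻¹ : Aˣ) : A) = S := rfl
  have hRinvN1 : Ring.inverse ((N:A) + 1) = ↑hN1.unit⁻¹ := by
    conv_lhs => rw [← hN1.unit_spec]
    exact Ring.inverse_unit _
  have hCSG : Commute S G := by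
    have c1 : Commute S ((N:A) - 1) := hCSN.sub_right (Commute.one_right S)
    have c2 : Commute S ((hN1.unit : Aˣ) : A) := by
      rw [hN1.unit_spec]; exact hCSN.add_right (Commute.one_right S)
    rw [hG, hRinvN1]
    exact c1.mul_right c2.units_inv_right
  -- units
  let U : ℕ → Aˣ := fun k => (hU1 k).unit
  let V : ℕ → Aˣ := fun k => (hV1 k).unit
  have hU : ∀ k, ((U k : Aˣ) : A) = 1 - G ^ (2^k) := fun k => (hU1 k).unit_spec
  have hV : ∀ k, ((V k : Aˣ) : A) = 1 + G ^ (2^k) := fun k => (hV1 k).unit_spec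
  let W : ℕ → Aˣ := fun k => (U k)⁻¹ * V k * Su
  let X : ℕ → A := fun k => ↑(U k)⁻¹ * ↑(V k) * S
  have hXW : ∀ k, X k = ↑(W k) := fun k => rfl
  have hXinv : ∀ k, Ring.inverse (X k) = ↑(W k)⁻¹ := fun k => by
    rw [hXW k, Ring.inverse_unit]
  have hCSg : ∀ k, Commute S (G ^ (2^k)) := fun k => hCSG.pow_right _
  have hCSU : ∀ k, Commute S ((U k : Aˣ) : A) := fun k => by
    rw [hU k]; exact (Commute.one_right S).sub_right (hCSg k)
  have hCSV : ∀ k, Commute S ((V k : Aˣ) : A) := fun k => by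
    rw [hV k]; exact (Commute.one_right S).add_right (hCSg k)
  have hCUV : ∀ k, Commute ((U k : Aˣ) : A) ((V k : Aˣ) : A) := fun k => by
    rw [hU k, hV k]
    exact (Commute.one_left _).sub_left
      ((Commute.one_right _).add_right (Commute.refl _))
  have hg2 : ∀ k, G ^ (2^(k+1)) = G ^ (2^k) * G ^ (2^k) := fun k => by
    rw [← pow_add]; congr 1; rw [pow_succ, mul_two]
  have hUsucc : ∀ k, U (k+1) = U k * V k := fun k => Units.ext (by
    rw [Units.val_mul, hU, hU, hV, hg2]; noncomm_ring)
  -- closed form as stated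
  have hXeq : ∀ k, X k = Ring.inverse (1 - G^(2^k)) * (1 + G^(2^k)) * S := by
    intro k
    have h1 : Ring.inverse ((1:A) - G^(2^k)) = ((U k)⁻¹ : Aˣ) := by
      rw [← hU k, Ring.inverse_unit]
    rw [h1, ← hV k]
  have hGu1 : G * ↑hN1.unit = (N:A) - 1 := by
    rw [hG, hRinvN1, mul_assoc, Units.inv_mul, mul_one]
  have hCu1G : Commute ((hN1.unit : Aˣ) : A) G := by
    have cN1 : Commute ((N:A)+1) (N:A) := (Commute.refl _).add_left (Commute.one_left _)
    have c1 : Commute ((hN1.unit : Aˣ) : A) ((N:A) - 1) := by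
      rw [hN1.unit_spec]
      exact cN1.sub_right (Commute.one_right _)
    have c2 : Commute ((hN1.unit : Aˣ) : A) ((hN1.unit⁻¹ : Aˣ) : A) :=
      (Commute.refl _).units_inv_right
    rw [hG, hRinvN1]
    exact c1.mul_right c2
  have hu1G : ((hN1.unit : Aˣ) : A) * G = (N:A) - 1 := by rw [hCu1G.eq, hGu1]
  -- X 0 = a
  have hX0 : X 0 = (a : A) := by
    refine (Units.mul_right_inj (U 0)).mp ?_
    show ↑(U 0) * (↑(U 0)⁻¹ * ↑(V 0) * S) = ↑(U 0) * ↑a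
    rw [mul_assoc (↑(U 0)⁻¹ : A), Units.mul_inv_cancel_left, hU 0, hV 0]
    simp only [pow_zero, pow_one]
    refine (Units.mul_right_inj hN1.unit).mp ?_
    have eL : ((hN1.unit : Aˣ) : A) * ((1 + G) * S) = ↑a + ↑a := by
      rw [← mul_assoc, mul_add, mul_one, hu1G, hN1.unit_spec]
      have e1 : ((N:A)+1 + ((N:A)-1)) * S = (N:A)*S + (N:A)*S := by noncomm_ring
      rw [e1, hNS]
    have eR : ((hN1.unit : Aˣ) : A) * ((1 - G) * ↑a) = ↑a + ↑a := by
      rw [← mul_assoc, mul_sub, mul_one, hu1G, hN1.unit_spec]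
      noncomm_ring
    rw [eL, eR]
  -- recursion
  have hrec : ∀ k, X (k+1) = (2:ℂ)⁻¹ • (X k + Ring.inverse (X k)) := by
    intro k
    have hWinv : ((W k)⁻¹ : Aˣ) = Su⁻¹ * ((V k)⁻¹ * U k) := by
      show ((U k)⁻¹ * V k * Su)⁻¹ = Su⁻¹ * ((V k)⁻¹ * U k)
      rw [mul_inv_rev, mul_inv_rev, inv_inv]
    have hRi : Ring.inverse (X k) = S * (↑(V k)⁻¹ * ↑(U k)) := by
      rw [hXinv k, hWinv]
      simp [Units.val_mul, hSui]
    have cVUi : (↑(V k):A) * ↑(U k)⁻¹ = ↑(U k)⁻¹ * ↑(V k) :=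
      ((hCUV k).symm.units_inv_right).eq
    have cSVi : S * ((↑(V k)⁻¹:A)) = ↑(V k)⁻¹ * S := ((hCSV k).units_inv_right).eq
    have cSU : S * ((↑(U k):A)) = ↑(U k) * S := (hCSU k).eq
    rw [hRi]
    refine (Units.mul_right_inj (U k * V k)).mp ?_
    have lhs : (↑(U k * V k) : A) * X (k+1) = ↑(V (k+1)) * S := by
      rw [← hUsucc k]
      show ↑(U (k+1)) * (↑(U (k+1))⁻¹ * ↑(V (k+1)) * S) = ↑(V (k+1)) * S
      rw [mul_assoc (↑(U (k+1))⁻¹ : A), Units.mul_inv_cancel_left]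
    rw [lhs]
    have t1 : (↑(U k):A) * (↑(V k) * X k) = ↑(V k) * (↑(V k) * S) := by
      show (↑(U k):A) * (↑(V k) * (↑(U k)⁻¹ * ↑(V k) * S)) = ↑(V k) * (↑(V k) * S)
      rw [mul_assoc (↑(U k)⁻¹ : A), aux_mulswap cVUi, Units.mul_inv_cancel_left]
    have t2 : (↑(U k):A) * (↑(V k) * (S * (↑(V k)⁻¹ * ↑(U k))))
        = ↑(U k) * (↑(U k) * S) := by
      rw [aux_mulswap cSVi, cSU, Units.mul_inv_cancel_left]
    have rhs : (↑(U k * V k) : A) * ((2:ℂ)⁻¹ • (X k + S * (↑(V k)⁻¹ * ↑(U k))))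
        = (2:ℂ)⁻¹ • ((↑(V k):A) * (↑(V k) * S) + (↑(U k):A) * (↑(U k) * S)) := by
      rw [mul_smul_comm]
      congr 1
      rw [Units.val_mul, mul_assoc, mul_add, mul_add, t1, t2]
    rw [rhs, hU k, hV k, hV (k+1), hg2 k]
    have hid : ((1:A) + G^(2^k)) * (((1:A) + G^(2^k)) * S)
        + ((1:A) - G^(2^k)) * (((1:A) - G^(2^k)) * S)
        = (2:ℂ) • (((1:A) + G^(2^k) * G^(2^k)) * S) := by
      rw [two_smul]; noncomm_ring
    rw [hid, smul_smul]
    norm_num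
  -- quadratic identity and bound
  have hquad : ∀ k, X (k+1) - S
      = (2:ℂ)⁻¹ • (Ring.inverse (X k) * ((X k - S) * (X k - S))) := by
    intro k
    have hCSX : Commute S (X k) :=
      (((hCSU k).units_inv_right.mul_right (hCSV k)).mul_right (Commute.refl S))
    have hXX : (X k - S) * (X k - S) = X k * X k - X k * S - S * X k + S * S := by
      noncomm_ring
    rw [hrec k, hXX, hSS, hCSX.eq]
    rw [mul_add, mul_sub, mul_sub, mul_one]
    rw [hXinv k, hXW k, Units.inv_mul_cancel_left, Units.inv_mul_cancel_left]
    module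
  have hbd : ∀ k, ‖X (k+1) - S‖ ≤ (2:ℝ)⁻¹ * ‖Ring.inverse (X k)‖ * ‖X k - S‖^2 := by
    intro k
    rw [hquad k, norm_smul]
    have h1 : ‖(2:ℂ)⁻¹‖ = (2:ℝ)⁻¹ := by
      rw [norm_inv]; norm_num
    rw [h1, mul_assoc, sq]
    refine mul_le_mul_of_nonneg_left ?_ (by norm_num)
    calc ‖Ring.inverse (X k) * ((X k - S) * (X k - S))‖
        ≤ ‖Ring.inverse (X k)‖ * ‖(X k - S) * (X k - S)‖ := norm_mul_le _ _
      _ ≤ ‖Ring.inverse (X k)‖ * (‖X k - S‖ * ‖X k - S‖) :=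
          mul_le_mul_of_nonneg_left (norm_mul_le _ _) (norm_nonneg _)
  -- convergence
  have hgto : Tendsto (fun k : ℕ => G ^ (2^k)) atTop (nhds (0:A)) :=
    (aux_tendsto_pow hsr).comp (tendsto_pow_atTop_atTop_of_one_lt one_lt_two)
  have hXto : Tendsto X atTop (nhds S) := by
    have hcont1 : ContinuousAt (fun x : A => Ring.inverse ((1:A) - x) * ((1:A) + x) * S) 0 := by
      have c0 : ContinuousAt (fun x : A => Ring.inverse ((1:A) - x)) 0 := by
        have hf : ContinuousAt (fun x : A => (1:A) - x) 0 :=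
          (continuous_const.sub continuous_id).continuousAt
        have hg : ContinuousAt (Ring.inverse : A → A) ((fun x : A => (1:A) - x) 0) := by
          simpa using NormedRing.inverse_continuousAt (1 : Aˣ)
        exact hg.comp hf
      exact (c0.mul ((continuous_const.add continuous_id).continuousAt)).mul continuousAt_const
    have h2 := hcont1.tendsto.comp hgto
    simp only [Function.comp_def, sub_zero, add_zero, Ring.inverse_one, one_mul] at h2
    exact h2.congr fun k => (hXeq k).symm
  have hXinvto : Tendsto (fun k => Ring.inverse (X k)) atTop (nhds S) := by
    have hRi : ∀ k, Ring.inverse (X k)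
        = S * (Ring.inverse ((1:A) + G^(2^k)) * ((1:A) - G^(2^k))) := by
      intro k
      have hWinv : ((W k)⁻¹ : Aˣ) = Su⁻¹ * ((V k)⁻¹ * U k) := by
        show ((U k)⁻¹ * V k * Su)⁻¹ = Su⁻¹ * ((V k)⁻¹ * U k)
        rw [mul_inv_rev, mul_inv_rev, inv_inv]
      have h1 : Ring.inverse ((1:A) + G^(2^k)) = ((V k)⁻¹ : Aˣ) := by
        rw [← hV k, Ring.inverse_unit]
      rw [hXinv k, hWinv, h1, ← hU k]
      simp [Units.val_mul, hSui]
    have hcont1 : ContinuousAt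
        (fun x : A => S * (Ring.inverse ((1:A) + x) * ((1:A) - x))) 0 := by
      have c0 : ContinuousAt (fun x : A => Ring.inverse ((1:A) + x)) 0 := by
        have hf : ContinuousAt (fun x : A => (1:A) + x) 0 :=
          (continuous_const.add continuous_id).continuousAt
        have hg : ContinuousAt (Ring.inverse : A → A) ((fun x : A => (1:A) + x) 0) := by
          simpa using NormedRing.inverse_continuousAt (1 : Aˣ)
        exact hg.comp hf
      exact continuousAt_const.mul (c0.mul ((continuous_const.sub continuous_id).continuousAt))
    have h2 := hcont1.tendsto.comp hgto
    simp only [Function.comp_def, sub_zero, add_zero, Ring.inverse_one, one_mul, mul_one] at h2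
    exact h2.congr fun k => (hRi k).symm
  exact ⟨X, hX0, fun k => (hXW k) ▸ (W k).isUnit, hrec,
    fun k _ => ⟨hU1 k, hXeq k⟩, hXto, hXinvto, hbd⟩
end

section
/- If a and b are bounded operators on a Hilbert space such that Sp(ba) contains no real numbers ≤ 0, then Sp(ab) also contains no real numbers ≤ 0, and the 2×2 operator matrix [[0, a],[b, 0]] has sign equal to [[0, c],[c^{-1}, 0]] where c = a·(ba)^{-1/2}. -/
open Filter Topology ENNReal


lemma aux_zero {A : Type*} [NormedRing A] [NormedAlgebra ℂ A] [CompleteSpace A]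
    (x y d : A) (hd : ∀ n : ℕ, d = x ^ n * d * y ^ n)
    (hx : spectralRadius ℂ x ≠ ∞) (hy : spectralRadius ℂ y ≠ ∞)
    (h : spectralRadius ℂ x * spectralRadius ℂ y < 1) : d = 0 := by
  have T1 := spectrum.pow_nnnorm_pow_one_div_tendsto_nhds_spectralRadius x
  have T2 := spectrum.pow_nnnorm_pow_one_div_tendsto_nhds_spectralRadius y
  have Tm : Tendsto (fun n : ℕ =>
      ((‖x ^ n‖₊ : ℝ≥0∞) ^ (1 / n : ℝ)) * ((‖y ^ n‖₊ : ℝ≥0∞) ^ (1 / n : ℝ))) atTop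
      (𝓝 (spectralRadius ℂ x * spectralRadius ℂ y)) :=
    ENNReal.Tendsto.mul T1 (Or.inr hy) T2 (Or.inr hx)
  obtain ⟨ρ, hρ1, hρ2⟩ := ENNReal.lt_iff_exists_nnreal_btwn.mp h
  have hev : ∀ᶠ n : ℕ in atTop,
      ((‖x ^ n‖₊ : ℝ≥0∞) ^ (1 / n : ℝ)) * ((‖y ^ n‖₊ : ℝ≥0∞) ^ (1 / n : ℝ)) < (ρ : ℝ≥0∞) :=
    Tm.eventually_lt_const hρ1
  have hbd : ∀ᶠ n : ℕ in atTop, (‖d‖₊ : ℝ≥0∞) ≤ (ρ : ℝ≥0∞) ^ n * ‖d‖₊ := by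
    filter_upwards [hev, eventually_ge_atTop 1] with n hn hn1
    have hxy : (‖x ^ n‖₊ : ℝ≥0∞) * (‖y ^ n‖₊ : ℝ≥0∞) ≤ (ρ : ℝ≥0∞) ^ n := by
      have hne : (1 / n : ℝ) * n = 1 := by
        field_simp
      calc (‖x ^ n‖₊ : ℝ≥0∞) * (‖y ^ n‖₊ : ℝ≥0∞)
          = (((‖x ^ n‖₊ : ℝ≥0∞) ^ (1 / n : ℝ)) * ((‖y ^ n‖₊ : ℝ≥0∞) ^ (1 / n : ℝ))) ^ (n : ℝ) := by
            rw [ENNReal.mul_rpow_of_nonneg _ _ (Nat.cast_nonneg n), ← ENNReal.rpow_mul,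
              ← ENNReal.rpow_mul, hne, ENNReal.rpow_one, ENNReal.rpow_one]
        _ ≤ (ρ : ℝ≥0∞) ^ (n : ℝ) := ENNReal.rpow_le_rpow hn.le (Nat.cast_nonneg n)
        _ = (ρ : ℝ≥0∞) ^ n := ENNReal.rpow_natCast _ _
    have h1 : (‖d‖₊ : ℝ≥0∞) ≤ (‖x ^ n‖₊ : ℝ≥0∞) * ‖d‖₊ * ‖y ^ n‖₊ := by
      calc (‖d‖₊ : ℝ≥0∞) = ‖x ^ n * d * y ^ n‖₊ := by rw [← hd n]
        _ ≤ (‖x ^ n * d‖₊ : ℝ≥0∞) * ‖y ^ n‖₊ := by exact_mod_cast nnnorm_mul_le _ _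
        _ ≤ (‖x ^ n‖₊ : ℝ≥0∞) * ‖d‖₊ * ‖y ^ n‖₊ := by
            gcongr
            exact_mod_cast nnnorm_mul_le _ _
    calc (‖d‖₊ : ℝ≥0∞) ≤ (‖x ^ n‖₊ : ℝ≥0∞) * ‖d‖₊ * ‖y ^ n‖₊ := h1
      _ = (‖x ^ n‖₊ : ℝ≥0∞) * ‖y ^ n‖₊ * ‖d‖₊ := by ring
      _ ≤ (ρ : ℝ≥0∞) ^ n * ‖d‖₊ := by gcongr
  have hlim : Tendsto (fun n : ℕ => (ρ : ℝ≥0∞) ^ n * ‖d‖₊) atTop (𝓝 0) := by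
    have := ENNReal.Tendsto.mul_const
      (ENNReal.tendsto_pow_atTop_nhds_zero_of_lt_one hρ2)
      (Or.inr (ENNReal.coe_ne_top : (‖d‖₊ : ℝ≥0∞) ≠ ∞))
    simpa using this
  have : (‖d‖₊ : ℝ≥0∞) ≤ 0 := ge_of_tendsto hlim hbd
  simpa using this


lemma isUnit_smul_c {A : Type*} [Ring A] [Algebra ℂ A] {z : ℂ} (hz : z ≠ 0) {x : A}
    (hx : IsUnit x) : IsUnit (z • x) := by
  rw [Algebra.smul_def]
  exact (hz.isUnit.map (algebraMap ℂ A)).mul hx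

lemma affine_mem {A : Type*} [Ring A] [Algebra ℂ A] (x : A) {m z : ℂ} (hm : m ≠ 0)
    (hz : z ∈ spectrum ℂ (1 + m⁻¹ • x)) : m * (z - 1) ∈ spectrum ℂ x := by
  by_contra h
  have h1 := spectrum.notMem_iff.mp h
  refine (spectrum.mem_iff.mp hz) ?_
  rw [show algebraMap ℂ A z - (1 + m⁻¹ • x) = m⁻¹ • (algebraMap ℂ A (m * (z - 1)) - x) by
    rw [Algebra.algebraMap_eq_smul_one, Algebra.algebraMap_eq_smul_one, smul_sub, smul_smul,
      inv_mul_cancel_left₀ hm]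
    module]
  exact isUnit_smul_c (inv_ne_zero hm) h1

lemma affine_mem' {A : Type*} [Ring A] [Algebra ℂ A] (x : A) {m z : ℂ} (hm : m ≠ 0)
    (hz : z ∈ spectrum ℂ (1 - m⁻¹ • x)) : m * (1 - z) ∈ spectrum ℂ x := by
  have h0 : (1 : A) - m⁻¹ • x = 1 + m⁻¹ • (-x) := by rw [smul_neg]; abel
  rw [h0] at hz
  have h1 := affine_mem (-x) hm hz
  rw [← spectrum.neg_eq, Set.mem_neg] at h1
  have h3 : m * (1 - z) = -(m * (z - 1)) := by ring
  rwa [h3]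

lemma sqrt_unique {A : Type*} [NormedRing A] [NormedAlgebra ℂ A] [CompleteSpace A]
    {P Q : A} (h2 : P * P = Q * Q) {ε C : ℝ} (hε : 0 < ε) (hC : 0 < C)
    (hP : ∀ z ∈ spectrum ℂ P, ε ≤ z.re)
    (hQre : ∀ z ∈ spectrum ℂ Q, ε ≤ z.re) (hQC : ∀ z ∈ spectrum ℂ Q, ‖z‖ ≤ C) :
    P = Q := by
  obtain ⟨m, hm1, hmC'⟩ : ∃ m : ℝ, 1 ≤ m ∧ C ^ 2 / ε ≤ m := ⟨max 1 (C ^ 2 / ε),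
    le_max_left _ _, le_max_right _ _⟩
  have hm0 : (0:ℝ) < m := lt_of_lt_of_le one_pos hm1
  have hmne : ((m:ℂ)) ≠ 0 := by exact_mod_cast hm0.ne'
  have hmC : C ^ 2 ≤ ε * m := by
    calc C^2 = ε * (C^2/ε) := by field_simp
    _ ≤ ε * m := by
        exact mul_le_mul_of_nonneg_left hmC' hε.le
  have hεm : (0:ℝ) < ε / m := div_pos hε hm0
  -- u = 1 + m⁻¹ • P is a unit
  have hmem : ((-m : ℂ)) ∉ spectrum ℂ P := fun hc => by
    have := hP _ hc; simp at this; linarith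
  have hu' : IsUnit ((m : ℂ) • (1 : A) + P) := by
    have h1 := spectrum.notMem_iff.mp hmem
    have h1' := h1.neg
    rw [show -((algebraMap ℂ A) (-m : ℂ) - P) = (m : ℂ) • 1 + P by
      rw [Algebra.algebraMap_eq_smul_one]; module] at h1'
    exact h1'
  have hu : IsUnit (1 + ((m:ℂ))⁻¹ • P) := by
    rw [show (1 + ((m:ℂ))⁻¹ • P : A) = ((m:ℂ))⁻¹ • ((m : ℂ) • (1 : A) + P) by
      rw [smul_add, smul_smul, inv_mul_cancel₀ hmne, one_smul, add_comm]]
    exact isUnit_smul_c (inv_ne_zero hmne) hu'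
  obtain ⟨U, hUu⟩ := hu
  -- key intertwining identity
  have hPQ : P * (P - Q) + (P - Q) * Q = 0 := by
    rw [mul_sub, sub_mul, h2]; abel
  have key : (1 + ((m:ℂ))⁻¹ • P) * (P - Q) = (P - Q) * (1 - ((m:ℂ))⁻¹ • Q) := by
    have expand : (1 + ((m:ℂ))⁻¹ • P) * (P - Q) - (P - Q) * (1 - ((m:ℂ))⁻¹ • Q)
        = ((m:ℂ))⁻¹ • (P * (P - Q) + (P - Q) * Q) := by
      simp only [add_mul, mul_sub, sub_mul, mul_one, one_mul, smul_mul_assoc, mul_smul_comm,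
        smul_add]
      module
    rw [hPQ, smul_zero] at expand
    exact sub_eq_zero.mp expand
  have key' : (P - Q) = (↑U⁻¹ : A) * (P - Q) * (1 - ((m:ℂ))⁻¹ • Q) := by
    have h3 : (↑U⁻¹ : A) * ((1 + ((m:ℂ))⁻¹ • P) * (P - Q)) = P - Q := by
      rw [← mul_assoc, ← hUu, U.inv_mul, one_mul]
    rw [key, ← mul_assoc] at h3
    exact h3.symm
  have iter : ∀ n : ℕ, (P - Q) = (↑U⁻¹ : A) ^ n * (P - Q) * (1 - ((m:ℂ))⁻¹ • Q) ^ n := by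
    intro n
    induction n with
    | zero => simp
    | succ n ih =>
      rw [pow_succ, pow_succ']
      calc P - Q = (↑U⁻¹ : A) ^ n * (P - Q) * (1 - ((m:ℂ))⁻¹ • Q) ^ n := ih
        _ = (↑U⁻¹ : A) ^ n * ((↑U⁻¹ : A) * (P - Q) * (1 - ((m:ℂ))⁻¹ • Q)) *
            (1 - ((m:ℂ))⁻¹ • Q) ^ n := by rw [← key']
        _ = (↑U⁻¹:A) ^ n * (↑U⁻¹:A) * (P - Q) *
            ((1 - ((m:ℂ))⁻¹ • Q) * (1 - ((m:ℂ))⁻¹ • Q) ^ n) := by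
            simp only [mul_assoc]
  -- spectral bound for U⁻¹
  have hk₁pos : (0:ℝ) < (1 + ε / m)⁻¹ := by positivity
  have hk₁' : ∀ z ∈ spectrum ℂ (↑U⁻¹ : A), ‖z‖ ≤ (1 + ε / m)⁻¹ := by
    intro z hz
    have hz0 : z ≠ 0 := spectrum.ne_zero_of_mem_of_unit hz
    set zu : ℂˣ := Units.mk0 z hz0 with hzu
    have hz' : (↑zu : ℂ) ∈ spectrum ℂ (↑U⁻¹ : A) := hz
    have hzinv : ((zu⁻¹ : ℂˣ) : ℂ) ∈ spectrum ℂ ((U : A)) := by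
      have h4 := (spectrum.inv_mem_iff (r := zu) (a := U⁻¹)).mp hz'
      rwa [inv_inv] at h4
    rw [hUu] at hzinv
    have ht := affine_mem P hmne hzinv
    have htre : ε ≤ ((m : ℂ) * (((zu⁻¹ : ℂˣ) : ℂ) - 1)).re := hP _ ht
    have him : ((m : ℂ) * (((zu⁻¹ : ℂˣ) : ℂ) - 1)).re = m * (((zu⁻¹:ℂˣ):ℂ).re - 1) := by
      rw [show ((m:ℂ)) = ((m:ℝ):ℂ) from rfl, Complex.re_ofReal_mul]
      simp [Complex.sub_re]
    have hre2 : 1 + ε / m ≤ ((zu⁻¹:ℂˣ):ℂ).re := by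
      rw [him] at htre
      have h9 : ε / m ≤ ((zu⁻¹:ℂˣ):ℂ).re - 1 := by
        rw [div_le_iff₀ hm0]
        nlinarith
      linarith
    have hnorm_inv : 1 + ε / m ≤ ‖((zu⁻¹:ℂˣ):ℂ)‖ := by
      refine le_trans hre2 ?_
      exact Complex.re_le_norm _
    have h5 : ‖((zu⁻¹:ℂˣ):ℂ)‖ = ‖z‖⁻¹ := by
      rw [show ((zu⁻¹:ℂˣ):ℂ) = z⁻¹ by simp [hzu], norm_inv]
    rw [h5] at hnorm_inv
    calc ‖z‖ = (‖z‖⁻¹)⁻¹ := (inv_inv _).symm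
      _ ≤ (1 + ε / m)⁻¹ := inv_anti₀ (by positivity) hnorm_inv
  -- spectral bound for w
  have hk₂' : ∀ z ∈ spectrum ℂ ((1 : A) - ((m:ℂ))⁻¹ • Q),
      ‖z‖ ≤ Real.sqrt (1 - 2*ε/m + C^2/m^2) := by
    intro z hz
    have ht := affine_mem' Q hmne hz
    have htre : ε ≤ ((m:ℂ) * (1 - z)).re := hQre _ ht
    have htC : ‖(m:ℂ) * (1 - z)‖ ≤ C := hQC _ ht
    have hre : ((m:ℂ) * (1 - z)).re = m * (1 - z.re) := by
      rw [show ((m:ℂ)) = ((m:ℝ):ℂ) from rfl, Complex.re_ofReal_mul]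
      simp [Complex.sub_re]
    have him : ((m:ℂ) * (1 - z)).im = -(m * z.im) := by
      rw [show ((m:ℂ)) = ((m:ℝ):ℂ) from rfl]
      simp [Complex.mul_im, Complex.sub_im]
    have hC2 : (m * (1 - z.re))^2 + (m * z.im)^2 ≤ C^2 := by
      have h6 : ‖(m:ℂ) * (1 - z)‖^2 = (m * (1 - z.re))^2 + (m * z.im)^2 := by
        rw [Complex.sq_norm, Complex.normSq_apply, hre, him]
        ring
      nlinarith [norm_nonneg ((m:ℂ) * (1 - z))]
    have htre' : ε ≤ m * (1 - z.re) := by rwa [hre] at htre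
    have hz2 : z.re^2 + z.im^2 ≤ 1 - 2*ε/m + C^2/m^2 := by
      have hkey : m^2*(z.re^2 + z.im^2) ≤ m^2 - 2*ε*m + C^2 := by
        nlinarith [mul_le_mul_of_nonneg_left htre' hm0.le]
      have h8 : 1 - 2*ε/m + C^2/m^2 = (m^2 - 2*ε*m + C^2)/m^2 := by
        field_simp
      rw [h8, le_div_iff₀ (by positivity : (0:ℝ) < m^2)]
      nlinarith
    have hznorm : ‖z‖^2 = z.re^2 + z.im^2 := by
      rw [Complex.sq_norm, Complex.normSq_apply]; ring
    have : ‖z‖^2 ≤ 1 - 2*ε/m + C^2/m^2 := by rw [hznorm]; exact hz2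
    calc ‖z‖ = Real.sqrt (‖z‖^2) := (Real.sqrt_sq (norm_nonneg z)).symm
      _ ≤ Real.sqrt (1 - 2*ε/m + C^2/m^2) := Real.sqrt_le_sqrt this
  -- product of bounds < 1
  have hk2lt : Real.sqrt (1 - 2*ε/m + C^2/m^2) < 1 + ε / m := by
    refine (Real.sqrt_lt' (by positivity)).mpr ?_
    have hmm : (0:ℝ) < m^2 := by positivity
    have h7 : C^2/m^2 ≤ ε/m := by
      rw [div_le_div_iff₀ hmm hm0]
      nlinarith
    have e1 : (1 + ε/m)^2 = 1 + 2*(ε/m) + (ε/m)^2 := by ring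
    have e2 : 2*ε/m = 2*(ε/m) := by ring
    nlinarith [hεm, sq_nonneg (ε/m)]
  have hklt : (1 + ε / m)⁻¹ * Real.sqrt (1 - 2*ε/m + C^2/m^2) < 1 := by
    have h10 := mul_lt_mul_of_pos_left hk2lt hk₁pos
    rwa [inv_mul_cancel₀ (ne_of_gt (by positivity : (0:ℝ) < 1 + ε/m))] at h10
  -- conclude with aux_zero
  have hr1 : spectralRadius ℂ (↑U⁻¹ : A) ≤ ENNReal.ofReal ((1 + ε / m)⁻¹) := by
    rw [spectralRadius]
    refine iSup₂_le fun z hz => ?_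
    rw [show ((‖z‖₊ : ℝ≥0∞)) = ENNReal.ofReal ‖z‖ by rw [ofReal_norm]; rfl]
    exact ENNReal.ofReal_le_ofReal (hk₁' z hz)
  have hr2 : spectralRadius ℂ ((1 : A) - ((m:ℂ))⁻¹ • Q)
      ≤ ENNReal.ofReal (Real.sqrt (1 - 2*ε/m + C^2/m^2)) := by
    rw [spectralRadius]
    refine iSup₂_le fun z hz => ?_
    rw [show ((‖z‖₊ : ℝ≥0∞)) = ENNReal.ofReal ‖z‖ by rw [ofReal_norm]; rfl]
    exact ENNReal.ofReal_le_ofReal (hk₂' z hz)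
  have hprod : spectralRadius ℂ (↑U⁻¹ : A) * spectralRadius ℂ ((1 : A) - ((m:ℂ))⁻¹ • Q) < 1 := by
    refine lt_of_le_of_lt (mul_le_mul' hr1 hr2) ?_
    rw [← ENNReal.ofReal_mul hk₁pos.le]
    exact ENNReal.ofReal_lt_one.mpr hklt
  have hfin1 : spectralRadius ℂ (↑U⁻¹ : A) ≠ ⊤ := ne_top_of_le_ne_top ENNReal.ofReal_ne_top hr1
  have hfin2 : spectralRadius ℂ ((1 : A) - ((m:ℂ))⁻¹ • Q) ≠ ⊤ :=
    ne_top_of_le_ne_top ENNReal.ofReal_ne_top hr2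
  have hzero := aux_zero (↑U⁻¹ : A) ((1 : A) - ((m:ℂ))⁻¹ • Q) (P - Q) iter hfin1 hfin2 hprod
  exact sub_eq_zero.mp hzero

lemma isUnit_of_left_right {A : Type*} [Monoid A] {a l r : A} (hl : l * a = 1)
    (hr : a * r = 1) : IsUnit a := by
  have hlr : l = r := by rw [← mul_one l, ← hr, ← mul_assoc, hl, one_mul]
  exact ⟨⟨a, r, hr, by rw [← hlr, hl]⟩, rfl⟩

lemma algebraMap_fin_two {A : Type*} [Ring A] [Algebra ℂ A] (z : ℂ) :
    algebraMap ℂ (Matrix (Fin 2) (Fin 2) A) z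
      = !![algebraMap ℂ A z, 0; 0, algebraMap ℂ A z] := by
  ext i j
  fin_cases i <;> fin_cases j <;>
    simp [Matrix.algebraMap_matrix_apply]

lemma diag_spectrum {A : Type*} [Ring A] [Algebra ℂ A] (x y : A) :
    spectrum ℂ (!![x, 0; 0, y] : Matrix (Fin 2) (Fin 2) A)
      ⊆ spectrum ℂ x ∪ spectrum ℂ y := by
  intro z hz
  by_contra h
  rw [Set.mem_union] at h
  obtain ⟨hx, hy⟩ := not_or.mp h
  obtain ⟨Vx, hVx⟩ := spectrum.notMem_iff.mp hx
  obtain ⟨Vy, hVy⟩ := spectrum.notMem_iff.mp hy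
  refine spectrum.mem_iff.mp hz ?_
  have hdiff : algebraMap ℂ (Matrix (Fin 2) (Fin 2) A) z - !![x, 0; 0, y]
      = !![algebraMap ℂ A z - x, 0; 0, algebraMap ℂ A z - y] := by
    rw [algebraMap_fin_two]
    ext i j
    fin_cases i <;> fin_cases j <;> simp
  refine ⟨⟨algebraMap ℂ _ z - !![x, 0; 0, y], !![↑Vx⁻¹, 0; 0, ↑Vy⁻¹], ?_, ?_⟩, rfl⟩
  · rw [hdiff, Matrix.mul_fin_two, ← hVx, ← hVy]
    simp [Matrix.one_fin_two]
  · rw [hdiff, Matrix.mul_fin_two, ← hVx, ← hVy]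
    simp [Matrix.one_fin_two]

lemma entry_mul_right {A : Type*} [Ring A] {x y : A} (M : Matrix (Fin 2) (Fin 2) A)
    (h : (!![x, 0; 0, y] : Matrix (Fin 2) (Fin 2) A) * M = 1) : x * M 0 0 = 1 := by
  have h2 := Matrix.ext_iff.mpr h 0 0
  rw [Matrix.mul_apply, Fin.sum_univ_two] at h2
  simpa using h2

lemma entry_mul_left {A : Type*} [Ring A] {x y : A} (M : Matrix (Fin 2) (Fin 2) A)
    (h : M * (!![x, 0; 0, y] : Matrix (Fin 2) (Fin 2) A) = 1) : M 0 0 * x = 1 := by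
  have h2 := Matrix.ext_iff.mpr h 0 0
  rw [Matrix.mul_apply, Fin.sum_univ_two] at h2
  simpa using h2

lemma diag_isUnit {A : Type*} [Ring A] {x y : A}
    (h : IsUnit (!![x, 0; 0, y] : Matrix (Fin 2) (Fin 2) A)) : IsUnit x := by
  obtain ⟨V, hV⟩ := h
  have h1 : (!![x, 0; 0, y] : Matrix (Fin 2) (Fin 2) A) * (V⁻¹).1 = 1 := by
    rw [← hV]; exact V.mul_inv
  have h2 : (V⁻¹).1 * !![x, 0; 0, y] = 1 := by
    rw [← hV]; exact V.inv_mul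
  exact isUnit_of_left_right (entry_mul_left _ h2) (entry_mul_right _ h1)

attribute [local instance] Matrix.linftyOpNormedRing Matrix.linftyOpNormedAlgebra


/-- if Sp(ba) contains no reals ≤ 0 then neither does Sp(ab), and
sign([[0,a],[b,0]]) = [[0,c],[c⁻¹,0]] where c = a·(ba)^{-1/2}.  Here s is the principal
square root of ba, and R the principal square root of T² for T = [[0,a],[b,0]]. -/
theorem stmt14 {H : Type*} [NormedAddCommGroup H] [InnerProductSpace ℂ H] [CompleteSpace H]
    (a b : H →L[ℂ] H)
    (hba : ∀ x : ℝ, x ≤ 0 → (x : ℂ) ∉ spectrum ℂ (b * a))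
    (s : H →L[ℂ] H) (hs2 : s * s = b * a) (hscomm : (b * a) * s = s * (b * a))
    (hsspec : ∀ z ∈ spectrum ℂ s, 0 < z.re) (hsu : IsUnit s)
    (R : Matrix (Fin 2) (Fin 2) (H →L[ℂ] H))
    (hR2 : R * R = !![0, a; b, 0] * !![0, a; b, 0])
    (hRcomm : !![0, a; b, 0] * R = R * !![0, a; b, 0])
    (hRspec : ∀ z ∈ spectrum ℂ R, 0 < z.re) (hRu : IsUnit R) :
    (∀ x : ℝ, x ≤ 0 → (x : ℂ) ∉ spectrum ℂ (a * b)) ∧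
    IsUnit (a * Ring.inverse s) ∧
    !![0, a; b, 0] * Ring.inverse R
      = !![0, a * Ring.inverse s; Ring.inverse (a * Ring.inverse s), 0] := by
  rcases subsingleton_or_nontrivial H with hH | hH
  · haveI hsub : Subsingleton (H →L[ℂ] H) :=
      ⟨fun f g => by ext x; exact Subsingleton.elim _ _⟩
    refine ⟨fun x _ => by rw [spectrum.of_subsingleton]; exact Set.notMem_empty _,
      isUnit_of_subsingleton _, Subsingleton.elim _ _⟩
  -- nontrivial case
  haveI hnt : Nontrivial (H →L[ℂ] H) := by
    obtain ⟨v, hv⟩ := exists_ne (0 : H)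
    exact ⟨1, 0, fun hc => hv (by
      have := DFunLike.congr_fun hc v
      simpa using this)⟩
  have hTT : (!![0, a; b, 0] : Matrix (Fin 2) (Fin 2) (H →L[ℂ] H)) * !![0, a; b, 0]
      = !![a * b, 0; 0, b * a] := by
    rw [Matrix.mul_fin_two]
    norm_num
  -- a * b is a unit
  have hab : IsUnit (a * b) := by
    refine diag_isUnit (x := a * b) (y := b * a) ?_
    rw [← hTT, ← hR2]
    exact hRu.mul hRu
  -- a is a unit
  have hau : IsUnit a := by
    obtain ⟨Su, hSu⟩ := hsu
    obtain ⟨Vab, hVab⟩ := hab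
    have hinv_s : (Su⁻¹).1 * s = 1 := by rw [← hSu]; exact Su.inv_mul
    have hL : ((Su⁻¹).1 * ((Su⁻¹).1 * b)) * a = 1 := by
      rw [mul_assoc, mul_assoc, ← hs2, ← mul_assoc (Su⁻¹).1 s s, hinv_s, one_mul, hinv_s]
    have hR' : a * (b * (Vab⁻¹).1) = 1 := by
      rw [← mul_assoc, ← hVab]
      exact Vab.mul_inv
    exact isUnit_of_left_right hL hR'
  obtain ⟨Su, rfl⟩ := hsu
  obtain ⟨Ua, rfl⟩ := hau
  -- b in terms of units
  have hb : b = ((Su * Su * Ua⁻¹ : (H →L[ℂ] H)ˣ) : H →L[ℂ] H) := by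
    have h1 : b * (Ua : H →L[ℂ] H) * (Ua⁻¹).1 = b := by
      rw [mul_assoc, Ua.mul_inv, mul_one]
    rw [← h1, ← hs2]
    simp [Units.val_mul]
  subst hb
  -- goal 1
  have goal1 : ∀ x : ℝ, x ≤ 0 →
      (x : ℂ) ∉ spectrum ℂ ((Ua : H →L[ℂ] H) * ((Su * Su * Ua⁻¹ : (H →L[ℂ] H)ˣ) : H →L[ℂ] H)) := by
    intro x hx hmem
    by_cases hx0 : x = 0
    · subst hx0
      rw [show ((0:ℝ):ℂ) = 0 by norm_num] at hmem
      exact (spectrum.zero_notMem_iff ℂ).mpr hab hmem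
    · have hxne : ((x:ℝ):ℂ) ≠ 0 := by exact_mod_cast hx0
      have h1 : ((x:ℝ):ℂ) ∈ spectrum ℂ ((Ua : H →L[ℂ] H)
          * ((Su * Su * Ua⁻¹ : (H →L[ℂ] H)ˣ) : H →L[ℂ] H)) \ {0} := ⟨hmem, by simpa using hxne⟩
      rw [spectrum.nonzero_mul_comm] at h1
      exact hba x hx h1.1
  -- spectral data
  obtain ⟨zs, hzs, hzsmin⟩ := (spectrum.isCompact ((Su : H →L[ℂ] H))).exists_isMinOn
    (spectrum.nonempty _) (Complex.continuous_re.continuousOn)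
  haveI : @CompleteSpace (Matrix (Fin 2) (Fin 2) (H →L[ℂ] H))
      (PseudoMetricSpace.toUniformSpace (α := Matrix (Fin 2) (Fin 2) (H →L[ℂ] H))) :=
    inferInstanceAs (CompleteSpace (Fin 2 → Fin 2 → (H →L[ℂ] H)))
  obtain ⟨zR, hzR, hzRmin⟩ := (spectrum.isCompact R).exists_isMinOn
    (spectrum.nonempty _) (Complex.continuous_re.continuousOn)
  have hε : 0 < min zR.re zs.re := lt_min (hRspec _ hzR) (hsspec _ hzs)
  have hC : (0:ℝ) < ‖(Su : H →L[ℂ] H)‖ + 1 := by positivity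
  have hsbound : ∀ z ∈ spectrum ℂ ((Su : H →L[ℂ] H)),
      min zR.re zs.re ≤ z.re ∧ ‖z‖ ≤ ‖(Su : H →L[ℂ] H)‖ + 1 := fun z hz =>
    ⟨le_trans (min_le_right _ _) (isMinOn_iff.mp hzsmin z hz),
      le_trans (spectrum.norm_le_norm_of_mem hz) (by linarith)⟩
  -- Q and uniqueness
  have hQ2 : R * R = (!![((Ua * Su * Ua⁻¹ : (H →L[ℂ] H)ˣ) : H →L[ℂ] H), 0; 0,
      ((Su : H →L[ℂ] H))] : Matrix (Fin 2) (Fin 2) (H →L[ℂ] H))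
      * !![((Ua * Su * Ua⁻¹ : (H →L[ℂ] H)ˣ) : H →L[ℂ] H), 0; 0, ((Su : H →L[ℂ] H))] := by
    rw [hR2, Matrix.mul_fin_two, Matrix.mul_fin_two]
    ext i j
    fin_cases i <;> fin_cases j <;>
      · simp only [Matrix.cons_val', Matrix.cons_val_zero, Matrix.empty_val',
          Matrix.cons_val_fin_one, Matrix.cons_val_one, Matrix.head_cons, Matrix.head_fin_const,
          Matrix.of_apply, zero_mul, mul_zero, add_zero, zero_add, mul_one, one_mul]
        simp only [← Units.val_mul, zero_mul, mul_zero, add_zero, zero_add, Fin.mk_one, Fin.zero_eta,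
            Matrix.cons_val_zero, Matrix.cons_val_one, Matrix.head_cons]
        try (congr 1; group)
  have hQspec : ∀ z ∈ spectrum ℂ (!![((Ua * Su * Ua⁻¹ : (H →L[ℂ] H)ˣ) : H →L[ℂ] H), 0; 0,
      ((Su : H →L[ℂ] H))] : Matrix (Fin 2) (Fin 2) (H →L[ℂ] H)),
      min zR.re zs.re ≤ z.re ∧ ‖z‖ ≤ ‖(Su : H →L[ℂ] H)‖ + 1 := by
    intro z hz
    rcases diag_spectrum _ _ hz with h | h
    · rw [show ((Ua * Su * Ua⁻¹ : (H →L[ℂ] H)ˣ) : H →L[ℂ] H)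
          = (Ua : H →L[ℂ] H) * ((Su : H →L[ℂ] H)) * ((Ua⁻¹ : (H →L[ℂ] H)ˣ) : H →L[ℂ] H) by
          simp [Units.val_mul], spectrum.units_conjugate] at h
      exact hsbound z h
    · exact hsbound z h
  have hRbound : ∀ z ∈ spectrum ℂ R, min zR.re zs.re ≤ z.re := fun z hz =>
    le_trans (min_le_left _ _) (isMinOn_iff.mp hzRmin z hz)
  have hRQ : R = !![((Ua * Su * Ua⁻¹ : (H →L[ℂ] H)ˣ) : H →L[ℂ] H), 0; 0,
      ((Su : H →L[ℂ] H))] :=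
    sqrt_unique hQ2 hε hC hRbound (fun z hz => (hQspec z hz).1) (fun z hz => (hQspec z hz).2)
  -- invert Q
  refine ⟨goal1, ?_, ?_⟩
  · rw [show ((Su : H →L[ℂ] H)) = ((Su : (H →L[ℂ] H)ˣ) : H →L[ℂ] H) from rfl,
      Ring.inverse_unit, ← Units.val_mul]
    exact (Ua * Su⁻¹).isUnit
  · -- final matrix identity
    have hpf1 : (!![((Ua * Su * Ua⁻¹ : (H →L[ℂ] H)ˣ) : H →L[ℂ] H), 0; 0,
        ((Su : H →L[ℂ] H))] : Matrix (Fin 2) (Fin 2) (H →L[ℂ] H))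
        * !![(((Ua * Su * Ua⁻¹)⁻¹ : (H →L[ℂ] H)ˣ) : H →L[ℂ] H), 0; 0,
        ((Su⁻¹ : (H →L[ℂ] H)ˣ) : H →L[ℂ] H)] = 1 := by
      rw [Matrix.mul_fin_two, Matrix.one_fin_two]
      ext i j
      fin_cases i <;> fin_cases j <;>
        · simp only [Matrix.cons_val', Matrix.cons_val_zero, Matrix.empty_val',
            Matrix.cons_val_fin_one, Matrix.cons_val_one, Matrix.head_cons, Matrix.head_fin_const,
            Matrix.of_apply, zero_mul, mul_zero, add_zero, zero_add, mul_one, one_mul]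
          simp only [← Units.val_mul, zero_mul, mul_zero, add_zero, zero_add, Fin.mk_one, Fin.zero_eta,
            Matrix.cons_val_zero, Matrix.cons_val_one, Matrix.head_cons]
          try (rw [show ((1 : H →L[ℂ] H)) = ((1 : (H →L[ℂ] H)ˣ) : H →L[ℂ] H) from rfl]
               congr 1
               group)
    have hpf2 : (!![(((Ua * Su * Ua⁻¹)⁻¹ : (H →L[ℂ] H)ˣ) : H →L[ℂ] H), 0; 0,
        ((Su⁻¹ : (H →L[ℂ] H)ˣ) : H →L[ℂ] H)] : Matrix (Fin 2) (Fin 2) (H →L[ℂ] H))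
        * !![((Ua * Su * Ua⁻¹ : (H →L[ℂ] H)ˣ) : H →L[ℂ] H), 0; 0,
        ((Su : H →L[ℂ] H))] = 1 := by
      rw [Matrix.mul_fin_two, Matrix.one_fin_two]
      ext i j
      fin_cases i <;> fin_cases j <;>
        · simp only [Matrix.cons_val', Matrix.cons_val_zero, Matrix.empty_val',
            Matrix.cons_val_fin_one, Matrix.cons_val_one, Matrix.head_cons, Matrix.head_fin_const,
            Matrix.of_apply, zero_mul, mul_zero, add_zero, zero_add, mul_one, one_mul]
          simp only [← Units.val_mul, zero_mul, mul_zero, add_zero, zero_add, Fin.mk_one, Fin.zero_eta,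
            Matrix.cons_val_zero, Matrix.cons_val_one, Matrix.head_cons]
          try (rw [show ((1 : H →L[ℂ] H)) = ((1 : (H →L[ℂ] H)ˣ) : H →L[ℂ] H) from rfl]
               congr 1
               group)
    have hRinv : Ring.inverse R
        = !![(((Ua * Su * Ua⁻¹)⁻¹ : (H →L[ℂ] H)ˣ) : H →L[ℂ] H), 0; 0,
          ((Su⁻¹ : (H →L[ℂ] H)ˣ) : H →L[ℂ] H)] := by
      rw [hRQ]
      exact Ring.inverse_unit ⟨_, _, hpf1, hpf2⟩
    have hc : (Ua : H →L[ℂ] H) * Ring.inverse ((Su : H →L[ℂ] H))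
        = ((Ua * Su⁻¹ : (H →L[ℂ] H)ˣ) : H →L[ℂ] H) := by
      rw [show ((Su : H →L[ℂ] H)) = ((Su : (H →L[ℂ] H)ˣ) : H →L[ℂ] H) from rfl,
        Ring.inverse_unit, ← Units.val_mul]
    have hcinv : Ring.inverse (((Ua * Su⁻¹ : (H →L[ℂ] H)ˣ) : H →L[ℂ] H))
        = (((Ua * Su⁻¹)⁻¹ : (H →L[ℂ] H)ˣ) : H →L[ℂ] H) := Ring.inverse_unit _
    rw [hRinv, hc, hcinv, Matrix.mul_fin_two]
    ext i j
    fin_cases i <;> fin_cases j <;>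
      · simp only [Matrix.cons_val', Matrix.cons_val_zero, Matrix.empty_val',
          Matrix.cons_val_fin_one, Matrix.cons_val_one, Matrix.head_cons, Matrix.head_fin_const,
          Matrix.of_apply, zero_mul, mul_zero, add_zero, zero_add, mul_one, one_mul]
        simp only [← Units.val_mul, zero_mul, mul_zero, add_zero, zero_add, Fin.mk_one, Fin.zero_eta,
            Matrix.cons_val_zero, Matrix.cons_val_one, Matrix.head_cons]
        try (congr 1; group)
end

section
/- Let a and b be bounded operators on a Hilbert space H with b accretive and a strictly accretive (a + a* ≥ ε·1 for some ε > 0, so a is invertible). Then ‖(b + ta)^{-1}‖ ≤ 1/(tε) for all t > 0, and consequently a^{-1/2} b a^{-1/2} is of type M: ‖(a^{-1/2} b a^{-1/2} + t1)^{-1}‖ ≤ ‖a^{1/2}‖²/(tε) for all t > 0. -/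
open ContinuousLinearMap in
private lemma stmt16_key {H : Type*} [NormedAddCommGroup H] [InnerProductSpace ℂ H]
    [CompleteSpace H] (T : H →L[ℂ] H) (c : ℝ) (hc : 0 < c)
    (hT : ∀ ζ : H, c * ‖ζ‖ ^ 2 ≤ (@inner ℂ H _ (T ζ) ζ).re) :
    IsUnit T ∧ ‖Ring.inverse T‖ ≤ 1 / c := by
  have lower : ∀ ζ : H, c * ‖ζ‖ ≤ ‖T ζ‖ := by
    intro ζ
    rcases eq_or_ne ζ 0 with rfl | hζ
    · simp
    · have h1 : c * ‖ζ‖ ^ 2 ≤ (@inner ℂ H _ (T ζ) ζ).re := hT ζ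
      have h2 : (@inner ℂ H _ (T ζ) ζ).re ≤ ‖(@inner ℂ H _ (T ζ) ζ)‖ := Complex.re_le_norm _
      have h3 : ‖(@inner ℂ H _ (T ζ) ζ)‖ ≤ ‖T ζ‖ * ‖ζ‖ := norm_inner_le_norm _ _
      have hpos : 0 < ‖ζ‖ := norm_pos_iff.mpr hζ
      nlinarith
  have hzero : ∀ ζ : H, T ζ = 0 → ζ = 0 := by
    intro ζ hζ
    by_contra hne
    have h := lower ζ
    rw [hζ, norm_zero] at h
    have : 0 < ‖ζ‖ := norm_pos_iff.mpr hne
    nlinarith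
  have hker : T.ker = ⊥ := by
    rw [Submodule.eq_bot_iff]
    intro x hx
    exact hzero x hx
  have hanti : AntilipschitzWith (⟨c, hc.le⟩ : NNReal)⁻¹ T :=
    ContinuousLinearMap.antilipschitz_of_bound T (fun x => by
      change ‖x‖ ≤ c⁻¹ * ‖T x‖
      rw [inv_mul_eq_div, le_div_iff₀ hc]
      have := lower x
      nlinarith)
  have hclosed : IsClosed (T.range : Set H) := by
    have := hanti.isClosed_range T.uniformContinuous
    convert this using 1
    ext y; simp
  haveI : CompleteSpace T.range := hclosed.completeSpace_coe
  have hrange : T.range = ⊤ := by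
    rw [← Submodule.orthogonal_eq_bot_iff]
    rw [Submodule.eq_bot_iff]
    intro ζ hζ
    have h0 : (@inner ℂ H _ (T ζ) ζ) = 0 := by
      rw [← inner_conj_symm]
      rw [(Submodule.mem_orthogonal' _ _).mp hζ (T ζ) ⟨ζ, rfl⟩]
      simp
    have h1 := hT ζ
    rw [h0] at h1
    simp only [Complex.zero_re] at h1
    by_contra hne
    have h2 : 0 < ‖ζ‖ := norm_pos_iff.mpr hne
    have h3 : 0 < c * ‖ζ‖ ^ 2 := by positivity
    linarith
  set e := ContinuousLinearEquiv.ofBijective T hker hrange with he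
  have heT : ∀ x, e x = T x := fun x => rfl
  have hTS : T * (e.symm : H →L[ℂ] H) = 1 := by
    ext x; simp [ContinuousLinearMap.mul_apply, ← heT]
  have hST : (e.symm : H →L[ℂ] H) * T = 1 := by
    ext x; simp [ContinuousLinearMap.mul_apply, ← heT]
  have hu : IsUnit T := ⟨⟨T, (e.symm : H →L[ℂ] H), hTS, hST⟩, rfl⟩
  refine ⟨hu, ?_⟩
  have hinv : T * Ring.inverse T = 1 := Ring.mul_inverse_cancel T hu
  apply ContinuousLinearMap.opNorm_le_bound _ (by positivity)
  intro x
  have h := lower (Ring.inverse T x)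
  have hTx : T (Ring.inverse T x) = x := by
    have := congrArg (fun f : H →L[ℂ] H => f x) hinv
    simpa [ContinuousLinearMap.mul_apply] using this
  rw [hTx] at h
  rw [div_mul_eq_mul_div, le_div_iff₀ hc]
  linarith [h]

/-- for b accretive and a strictly accretive (with constant ε) on a Hilbert
space, ‖(b + ta)⁻¹‖ ≤ 1/(tε) for all t > 0, and a^{-1/2}·b·a^{-1/2} is of type M with
‖(a^{-1/2}ba^{-1/2} + t)⁻¹‖ ≤ ‖a^{1/2}‖²/(tε).  Here r is the principal square root of a. -/
theorem stmt16 {H : Type*} [NormedAddCommGroup H] [InnerProductSpace ℂ H] [CompleteSpace H]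
    (a b : H →L[ℂ] H) (ε : ℝ) (hε : 0 < ε)
    (hb : ∀ ζ : H, 0 ≤ (@inner ℂ H _ (b ζ) ζ).re)
    (ha : ∀ ζ : H, ε * ‖ζ‖ ^ 2 ≤ (@inner ℂ H _ (a ζ) ζ).re)
    (r : H →L[ℂ] H) (hr2 : r * r = a)
    (hrspec : ∀ z ∈ spectrum ℂ r, 0 < z.re) (hru : IsUnit r) :
    ∀ t : ℝ, 0 < t →
      (IsUnit (b + (t : ℂ) • a) ∧ ‖Ring.inverse (b + (t : ℂ) • a)‖ ≤ 1 / (t * ε)) ∧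
      (IsUnit (Ring.inverse r * b * Ring.inverse r + (t : ℂ) • 1) ∧
        ‖Ring.inverse (Ring.inverse r * b * Ring.inverse r + (t : ℂ) • 1)‖
          ≤ ‖r‖ ^ 2 / (t * ε)) := by
  intro t ht
  set T := b + (t : ℂ) • a with hT
  have hcoer : ∀ ζ : H, (t * ε) * ‖ζ‖ ^ 2 ≤ (@inner ℂ H _ (T ζ) ζ).re := by
    intro ζ
    have hTζ : (@inner ℂ H _ (T ζ) ζ) = @inner ℂ H _ (b ζ) ζ + (t : ℂ) * @inner ℂ H _ (a ζ) ζ := by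
      have hTapp : T ζ = b ζ + (t : ℂ) • (a ζ) := rfl
      rw [hTapp, inner_add_left, inner_smul_left, Complex.conj_ofReal]
    rw [hTζ]
    have hre : ((t : ℂ) * @inner ℂ H _ (a ζ) ζ).re = t * (@inner ℂ H _ (a ζ) ζ).re := by
      simp [Complex.mul_re]
    rw [Complex.add_re, hre]
    nlinarith [hb ζ, ha ζ, mul_le_mul_of_nonneg_left (ha ζ) ht.le]
  obtain ⟨hu1, hn1⟩ := stmt16_key T (t * ε) (by positivity) hcoer
  refine ⟨⟨hu1, hn1⟩, ?_⟩
  set s := Ring.inverse r with hs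
  have h1 : s * r = 1 := Ring.inverse_mul_cancel r hru
  have h2 : r * s = 1 := Ring.mul_inverse_cancel r hru
  have hsu : IsUnit s := ⟨⟨s, r, h1, h2⟩, rfl⟩
  have hsas : s * (a * s) = 1 := by
    rw [← hr2, mul_assoc r r s, ← mul_assoc s r (r * s), h1, one_mul, h2]
  have heq : s * b * s + (t : ℂ) • 1 = s * T * s := by
    simp only [hT, mul_add, add_mul, mul_smul_comm, smul_mul_assoc, mul_assoc, hsas]
  rw [heq]
  have huX : IsUnit (s * T * s) := (hsu.mul hu1).mul hsu
  refine ⟨huX, ?_⟩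
  have hTT : T * Ring.inverse T = 1 := Ring.mul_inverse_cancel T hu1
  have hprod : (s * T * s) * (r * Ring.inverse T * r) = 1 := by
    calc (s * T * s) * (r * Ring.inverse T * r)
        = s * (T * ((s * r) * (Ring.inverse T * r))) := by simp only [mul_assoc]
      _ = s * (T * (Ring.inverse T * r)) := by rw [h1, one_mul]
      _ = s * ((T * Ring.inverse T) * r) := by rw [← mul_assoc T]
      _ = s * r := by rw [hTT, one_mul]
      _ = 1 := h1
  have hinveq : Ring.inverse (s * T * s) = r * Ring.inverse T * r := by
    calc Ring.inverse (s * T * s)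
        = Ring.inverse (s * T * s) * ((s * T * s) * (r * Ring.inverse T * r)) := by
          rw [hprod, mul_one]
      _ = (Ring.inverse (s * T * s) * (s * T * s)) * (r * Ring.inverse T * r) :=
          (mul_assoc _ _ _).symm
      _ = r * Ring.inverse T * r := by rw [Ring.inverse_mul_cancel _ huX, one_mul]
  rw [hinveq]
  have hb1 : ‖r * Ring.inverse T * r‖ ≤ ‖r‖ * ‖Ring.inverse T‖ * ‖r‖ :=
    le_trans (norm_mul_le _ _) (by gcongr; exact norm_mul_le _ _)
  have hrn : (0 : ℝ) ≤ ‖r‖ := norm_nonneg _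
  have htε : (0 : ℝ) < t * ε := by positivity
  calc ‖r * Ring.inverse T * r‖ ≤ ‖r‖ * ‖Ring.inverse T‖ * ‖r‖ := hb1
    _ ≤ ‖r‖ * (1 / (t * ε)) * ‖r‖ := by gcongr
    _ = ‖r‖ ^ 2 / (t * ε) := by ring
end

section
/- Let a and b be strictly accretive invertible elements of a unital Banach algebra such that for all t ≥ 0, ta + b is invertible. Then the spectrum of a^{-1/2} b a^{-1/2} contains no real numbers ≤ 0, and hence (a^{-1/2} b a^{-1/2})^{1/2} has spectrum in the open right half-plane; moreover G = a^{1/2}(a^{-1/2} b a^{-1/2})^{1/2} a^{1/2} satisfies G a^{-1} G = b. -/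
open Complex intervalIntegral NormedSpace Set

lemma slit_seg {z : ℂ} (hz : z ∈ Complex.slitPlane) {t : ℝ} (ht : t ∈ Set.Icc (0:ℝ) 1) :
    (1 + (t:ℂ) * (z - 1)) ∈ Complex.slitPlane := by
  rw [Complex.mem_slitPlane_iff] at hz ⊢
  obtain ⟨ht0, ht1⟩ := ht
  rcases eq_or_lt_of_le ht0 with h0 | h0
  · simp [← h0]
  rcases hz with hre | him
  · rcases eq_or_ne z.im 0 with hzim | hzim
    · left
      have : (1 + (t:ℂ) * (z-1)).re = 1 + t * (z.re - 1) := by simp [Complex.add_re, Complex.mul_re]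
      rw [this]
      nlinarith
    · right
      have : (1 + (t:ℂ) * (z-1)).im = t * z.im := by simp [Complex.add_im, Complex.mul_im]
      rw [this]
      exact mul_ne_zero (ne_of_gt h0) hzim
  · right
    have : (1 + (t:ℂ) * (z-1)).im = t * z.im := by simp [Complex.add_im, Complex.mul_im]
    rw [this]
    exact mul_ne_zero (ne_of_gt h0) him

lemma scalar_log_integral {z : ℂ} (hz : z ∈ Complex.slitPlane) :
    (∫ t in (0:ℝ)..1, (z - 1) * (1 + (t:ℂ) * (z - 1))⁻¹) = Complex.log z := by
  have hcont : ContinuousOn (fun t : ℝ => (z - 1) * (1 + (t:ℂ) * (z - 1))⁻¹) (Set.uIcc 0 1) := by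
    apply ContinuousOn.mul continuousOn_const
    apply ContinuousOn.inv₀
    · fun_prop
    · intro t ht
      rw [Set.uIcc_of_le (by norm_num)] at ht
      exact Complex.slitPlane_ne_zero (slit_seg hz ht)
  have key : ∀ t ∈ Set.uIcc (0:ℝ) 1,
      HasDerivAt (fun u : ℝ => Complex.log (1 + (u:ℂ) * (z - 1)))
        ((z - 1) * (1 + (t:ℂ) * (z - 1))⁻¹) t := by
    intro t ht
    rw [Set.uIcc_of_le (by norm_num)] at ht
    have hpath : HasDerivAt (fun u : ℝ => 1 + (u:ℂ) * (z - 1)) (z - 1) t := by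
      have h1 : HasDerivAt (fun u : ℝ => (u:ℂ)) 1 t := Complex.ofRealCLM.hasDerivAt
      simpa using ((h1.mul_const (z - 1)).const_add 1)
    have hlog := Complex.hasDerivAt_log (slit_seg hz ⟨ht.1, ht.2⟩)
    have := HasDerivAt.scomp (𝕜 := ℝ) t hlog hpath
    simpa [mul_comm, Function.comp_def] using this
  have := intervalIntegral.integral_eq_sub_of_hasDerivAt key (hcont.intervalIntegrable)
  rw [this]
  norm_num

lemma exp_half_log_re_pos {z : ℂ} (hz : z ∈ Complex.slitPlane) :
    0 < (Complex.exp ((2⁻¹ : ℂ) * Complex.log z)).re := by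
  rw [Complex.exp_re]
  apply mul_pos (Real.exp_pos _)
  have him : ((2⁻¹ : ℂ) * Complex.log z).im = (Complex.arg z) / 2 := by
    simp [Complex.mul_im, Complex.log_im]; ring
  rw [him]
  apply Real.cos_pos_of_mem_Ioo
  constructor
  · have := Complex.neg_pi_lt_arg z
    linarith
  · have h1 := Complex.arg_le_pi z
    have h2 : Complex.arg z ≠ Real.pi := by
      intro h
      rw [Complex.arg_eq_pi_iff] at h
      rw [Complex.mem_slitPlane_iff] at hz
      rcases hz with h' | h' <;> [linarith [h.1]; exact h' h.2]
    have : Complex.arg z < Real.pi := lt_of_le_of_ne h1 h2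
    linarith


lemma sqrt_in_comm {B : Type*} [NormedCommRing B] [NormedAlgebra ℂ B] [CompleteSpace B]
    (c : B) (hsp : ∀ z ∈ spectrum ℂ c, z ∈ Complex.slitPlane) :
    ∃ s : B, s * s = c ∧ ∀ z ∈ spectrum ℂ s, 0 < z.re := by
  letI : NormedAlgebra ℚ B := .restrictScalars ℚ ℂ B
  set g : ℝ → B := fun t => 1 + (t:ℂ) • (c - 1) with hg
  -- invertibility of g t on [0,1]
  have hunit : ∀ t ∈ Set.Icc (0:ℝ) 1, IsUnit (g t) := by
    intro t ht
    rcases eq_or_lt_of_le ht.1 with h0 | h0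
    · simp [hg, ← h0]
    · set x : ℝ := -((1 - t) / t) with hxdef
      have hx : x ≤ 0 := by
        have : 0 ≤ (1 - t) / t := div_nonneg (by linarith [ht.2]) (le_of_lt h0)
        simp [hxdef]; linarith
      have hznot : ((x:ℝ) : ℂ) ∉ spectrum ℂ c := by
        intro hmem
        have := hsp _ hmem
        rw [Complex.mem_slitPlane_iff] at this
        rcases this with h | h
        · rw [Complex.ofReal_re] at h; linarith
        · exact h (Complex.ofReal_im x)
      have h1 : IsUnit (algebraMap ℂ B (x:ℂ) - c) := spectrum.notMem_iff.mp hznot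
      have h2 : IsUnit (c - ((x:ℝ):ℂ) • (1:B)) := by
        have := h1.neg
        rwa [neg_sub, Algebra.algebraMap_eq_smul_one] at this
      have hx' : (t:ℂ) * ((x:ℝ):ℂ) = (t:ℝ) - 1 := by
        have ht0 : (t:ℂ) ≠ 0 := by exact_mod_cast ne_of_gt h0
        rw [hxdef]
        push_cast
        field_simp
        ring
      have key : ((t:ℝ):ℂ) • (c - ((x:ℝ):ℂ) • (1:B)) = g t := by
        rw [hg, smul_sub, smul_smul, hx']
        module
      rw [← key]
      have ht0 : ((t:ℝ):ℂ) ≠ 0 := by exact_mod_cast ne_of_gt h0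
      have := h2.smul (Units.mk0 ((t:ℝ):ℂ) ht0)
      rwa [Units.smul_def] at this
  have hgcont : Continuous g := by
    apply continuous_const.add
    exact (Complex.continuous_ofReal.smul continuous_const)
  set U : Set ℝ := g ⁻¹' {x : B | IsUnit x} with hU
  have hUopen : IsOpen U := Units.isOpen.preimage hgcont
  have hsub : Set.Icc (0:ℝ) 1 ⊆ U := fun t ht => hunit t ht
  set f : ℝ → B := fun t => (c - 1) * Ring.inverse (g t) with hf
  have hf_cont : ContinuousOn f U := by
    intro t ht
    apply ContinuousAt.continuousWithinAt
    apply ContinuousAt.mul continuousAt_const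
    have h1 : ContinuousAt Ring.inverse (g t) := by
      have := NormedRing.inverse_continuousAt (ht : IsUnit (g t)).unit
      rwa [IsUnit.unit_spec] at this
    exact h1.comp (hgcont.continuousAt)
  set L : ℝ → B := fun u => ∫ t in (0:ℝ)..u, f t with hLdef
  have hint : ∀ u ∈ Set.Icc (0:ℝ) 1, IntervalIntegrable f MeasureTheory.volume 0 u := by
    intro u hu
    apply ContinuousOn.intervalIntegrable
    apply hf_cont.mono
    intro t ht
    apply hsub
    rw [Set.uIcc_of_le hu.1] at ht
    exact ⟨ht.1, le_trans ht.2 hu.2⟩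
  have hL : ∀ u ∈ Set.Icc (0:ℝ) 1, HasDerivAt L (f u) u := by
    intro u hu
    exact intervalIntegral.integral_hasDerivAt_right (hint u hu)
      (ContinuousOn.stronglyMeasurableAtFilter hUopen hf_cont u (hsub hu))
      (hf_cont.continuousAt (hUopen.mem_nhds (hsub hu)))
  set h : ℝ → B := fun u => NormedSpace.exp (-(L u)) * g u with hh
  have hderiv : ∀ u ∈ Set.Icc (0:ℝ) 1, HasDerivAt h 0 u := by
    intro u hu
    have h1 : HasDerivAt (fun u => -(L u)) (-(f u)) u := (hL u hu).neg
    have h2 : HasDerivAt (fun u => NormedSpace.exp (-(L u))) (NormedSpace.exp (-(L u)) * -(f u)) u := by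
      have := ((hasFDerivAt_exp (𝕂 := ℂ) (x := -(L u))).restrictScalars ℝ).comp_hasDerivAt u h1
      simpa [smul_eq_mul, Function.comp_def] using this
    have h3 : HasDerivAt g (c - 1) u := by
      have h4 : HasDerivAt (fun v : ℝ => (v:ℂ)) 1 u := Complex.ofRealCLM.hasDerivAt
      have := (h4.smul_const (c - 1)).const_add (1:B)
      rw [one_smul] at this
      exact this
    have := h2.mul h3
    have hcancel : f u * g u = c - 1 := by
      rw [hf, mul_assoc, Ring.inverse_mul_cancel _ (hunit u hu), mul_one]
    have heq : NormedSpace.exp (-(L u)) * -(f u) * g u + NormedSpace.exp (-(L u)) * (c - 1) = 0 := by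
      rw [mul_assoc, neg_mul, hcancel]
      ring
    rwa [heq] at this
  have hconst : h 1 = h 0 := by
    have := norm_image_sub_le_of_norm_deriv_le_segment'
      (f := h) (f' := fun _ => 0) (a := 0) (b := 1) (C := 0)
      (fun x hx => (hderiv x hx).hasDerivWithinAt)
      (fun x _ => by simp) 1 (by norm_num)
    simp at this
    rwa [sub_eq_zero] at this
  have hL0 : L 0 = 0 := intervalIntegral.integral_same
  have hexpc : NormedSpace.exp (-(L 1)) * c = 1 := by
    have h0 : h 0 = 1 := by simp [hh, hL0, NormedSpace.exp_zero, hg]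
    have h1 : h 1 = NormedSpace.exp (-(L 1)) * c := by simp [hh, hg]
    rw [← h1, hconst, h0]
  have hexpL : NormedSpace.exp (L 1) = c := by
    have h2 : NormedSpace.exp (L 1) * NormedSpace.exp (-(L 1)) = 1 := by
      rw [← NormedSpace.exp_add]; simp
    calc NormedSpace.exp (L 1) = NormedSpace.exp (L 1) * (NormedSpace.exp (-(L 1)) * c) := by rw [hexpc, mul_one]
      _ = (NormedSpace.exp (L 1) * NormedSpace.exp (-(L 1))) * c := by ring
      _ = c := by rw [h2, one_mul]
  refine ⟨NormedSpace.exp ((2⁻¹ : ℂ) • L 1), ?_, ?_⟩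
  · rw [← NormedSpace.exp_add]
    rw [← add_smul]
    norm_num
    exact hexpL
  · intro z hz
    obtain ⟨φ, hφ⟩ := WeakDual.CharacterSpace.mem_spectrum_iff_exists.mp hz
    have hφcont : Continuous φ := by
      exact φ.1.continuous
    -- the value of φ at c lies in the spectrum
    have hzc : φ c ∈ spectrum ℂ c := by
      by_contra hcon
      have h1 : IsUnit (algebraMap ℂ B (φ c) - c) := spectrum.notMem_iff.mp hcon
      have h2 := h1.map φ
      rw [map_sub, AlgHomClass.commutes] at h2
      simp at h2
    have hslit := hsp _ hzc
    -- compute φ (L 1)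
    have hφL : φ (L 1) = Complex.log (φ c) := by
      have h1 : φ (L 1) = ∫ t in (0:ℝ)..1, φ (f t) := by
        exact (ContinuousLinearMap.intervalIntegral_comp_comm φ.1
          (hint 1 ⟨by norm_num, le_refl 1⟩)).symm
      rw [h1]
      rw [← scalar_log_integral hslit]
      apply intervalIntegral.integral_congr
      intro t ht
      rw [Set.uIcc_of_le (by norm_num : (0:ℝ) ≤ 1)] at ht
      have hgt : φ (g t) = 1 + (t:ℂ) * (φ c - 1) := by
        show φ (1 + (t:ℂ) • (c - 1)) = _
        rw [map_add, map_one, map_smul, map_sub, map_one, smul_eq_mul]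
      have hinv : φ (Ring.inverse (g t)) = (1 + (t:ℂ) * (φ c - 1))⁻¹ := by
        have hu := hunit t ht
        have h3 : Ring.inverse (g t) * g t = 1 := Ring.inverse_mul_cancel _ hu
        have h4 := congrArg φ h3
        rw [map_mul, map_one, hgt] at h4
        exact eq_inv_of_mul_eq_one_left h4
      show φ (f t) = (φ c - 1) * (1 + (t:ℂ) * (φ c - 1))⁻¹
      rw [hf]
      simp only [map_mul, map_sub, map_one, hinv]
    -- compute z
    have hzval : z = Complex.exp ((2⁻¹ : ℂ) * Complex.log (φ c)) := by
      rw [← hφ]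
      rw [NormedSpace.map_exp φ hφcont, map_smul, hφL, smul_eq_mul, Complex.exp_eq_exp_ℂ]
    rw [hzval]
    exact exp_half_log_re_pos hslit

lemma sqrt_of_slit {A : Type*} [NormedRing A] [NormedAlgebra ℂ A] [CompleteSpace A]
    (c : A) (hsp : ∀ z ∈ spectrum ℂ c, z ∈ Complex.slitPlane) :
    ∃ s : A, s * s = c ∧ ∀ z ∈ spectrum ℂ s, 0 < z.re := by
  set S : Set A := Set.centralizer {c} with hS
  set Bs : Subalgebra ℂ A := Subalgebra.centralizer ℂ S with hBs
  have hmemB : ∀ x : A, x ∈ Bs ↔ ∀ g ∈ S, g * x = x * g := fun x =>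
    Subalgebra.mem_centralizer_iff ℂ
  have hcS : c ∈ S := fun m hm => by rw [Set.mem_singleton_iff] at hm; rw [hm]
  have hBc : c ∈ Bs := (hmemB c).mpr (fun g hg => (hg c rfl).symm)
  have hBsub : ∀ x : A, x ∈ Bs → x ∈ S := by
    intro x hx m hm
    rw [Set.mem_singleton_iff] at hm
    rw [hm]
    exact (hmemB x).mp hx c hcS
  have hcomm : ∀ x y : Bs, x * y = y * x := by
    intro x y
    apply Subtype.ext
    show (x:A) * (y:A) = (y:A) * (x:A)
    exact ((hmemB (x:A)).mp x.2 (y:A) (hBsub _ y.2)).symm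
  have hclosed : IsClosed (Bs : Set A) := by
    have heq : (Bs : Set A) = ⋂ g ∈ S, {x : A | g * x = x * g} := by
      ext x
      simp only [SetLike.mem_coe, hmemB, Set.mem_iInter, Set.mem_setOf_eq]
    rw [heq]
    exact isClosed_biInter fun g _ =>
      isClosed_eq (continuous_const.mul continuous_id) (continuous_id.mul continuous_const)
  letI : NormedCommRing Bs := { (inferInstance : NormedRing Bs) with mul_comm := hcomm }
  letI : CompleteSpace Bs := hclosed.completeSpace_coe
  have hinvmem : ∀ x : Bs, IsUnit (x : A) → IsUnit x := by
    intro x hx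
    obtain ⟨u, hu⟩ := hx
    have hyS : (↑u⁻¹ : A) ∈ Bs := by
      rw [hmemB]
      intro g hg
      have h1 : g * (u : A) = (u : A) * g := by rw [hu]; exact (hmemB (x:A)).mp x.2 g hg
      have h2 : (↑u⁻¹ : A) * (g * (u:A)) = g := by
        rw [h1, ← mul_assoc, Units.inv_mul, one_mul]
      calc g * (↑u⁻¹ : A) = (↑u⁻¹ * (g * (u:A))) * ↑u⁻¹ := by rw [h2]
        _ = ↑u⁻¹ * (g * ((u:A) * ↑u⁻¹)) := by simp only [mul_assoc]
        _ = (↑u⁻¹ : A) * g := by rw [Units.mul_inv, mul_one]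
    refine isUnit_iff_exists.mpr ⟨⟨(↑u⁻¹ : A), hyS⟩, ?_, ?_⟩
    · apply Subtype.ext; show (x : A) * ↑u⁻¹ = 1; rw [← hu]; exact u.mul_inv
    · apply Subtype.ext; show (↑u⁻¹ : A) * x = 1; rw [← hu]; exact u.inv_mul
  set c' : Bs := ⟨c, hBc⟩ with hc'
  have hspB : ∀ z ∈ spectrum ℂ c', z ∈ Complex.slitPlane := by
    intro z hz
    apply hsp
    by_contra hcon
    have h1 : IsUnit (algebraMap ℂ A z - c) := spectrum.notMem_iff.mp hcon
    have h2 : IsUnit (algebraMap ℂ Bs z - c') := by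
      apply hinvmem
      have : ((algebraMap ℂ Bs z - c' : Bs) : A) = algebraMap ℂ A z - c := by
        push_cast
        rfl
      rw [this]
      exact h1
    exact spectrum.notMem_iff.mpr h2 hz
  obtain ⟨s', hs1, hs2⟩ := sqrt_in_comm c' hspB
  refine ⟨(s' : A), ?_, ?_⟩
  · have := congrArg Subtype.val hs1
    exact this
  · intro z hz
    apply hs2
    rw [spectrum.mem_iff] at hz ⊢
    intro hcon
    apply hz
    have := hcon.map Bs.val
    simpa using this

theorem stmt17' {A : Type*} [NormedRing A] [NormedAlgebra ℂ A] [CompleteSpace A] [NormOneClass A]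
    (a b : Aˣ)
    (hinv : ∀ t : ℝ, 0 ≤ t → IsUnit ((t : ℂ) • (a : A) + (b : A)))
    (r : Aˣ) (hr2 : (r : A) * r = (a : A)) :
    (∀ x : ℝ, x ≤ 0 → (x : ℂ) ∉ spectrum ℂ ((↑r⁻¹ : A) * (b : A) * (↑r⁻¹ : A))) ∧
    ∃ s : A, s * s = (↑r⁻¹ : A) * (b : A) * (↑r⁻¹ : A) ∧
      (∀ z ∈ spectrum ℂ s, 0 < z.re) ∧
      ((r : A) * s * (r : A)) * (↑a⁻¹ : A) * ((r : A) * s * (r : A)) = (b : A) := by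
  set c : A := (↑r⁻¹ : A) * (b : A) * (↑r⁻¹ : A) with hc
  have hcu : ∀ t : ℝ, 0 ≤ t → IsUnit ((t : ℂ) • (1 : A) + c) := by
    intro t ht
    have hu := hinv t ht
    have hkey : (↑r⁻¹ : A) * ((t:ℂ) • (a:A) + (b:A)) * (↑r⁻¹ : A) = (t:ℂ) • (1:A) + c := by
      have h1 : (↑r⁻¹ : A) * (a : A) * (↑r⁻¹ : A) = 1 := by
        rw [← hr2, ← mul_assoc (↑r⁻¹ : A) (r : A) (r : A), r.inv_mul, one_mul, r.mul_inv]
      rw [hc, mul_add, add_mul, mul_smul_comm, smul_mul_assoc, h1]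
    rw [← hkey]
    exact (r⁻¹.isUnit.mul hu).mul r⁻¹.isUnit
  have hnotmem : ∀ x : ℝ, x ≤ 0 → (x : ℂ) ∉ spectrum ℂ c := by
    intro x hx
    apply spectrum.notMem_iff.mpr
    have h1 := (hcu (-x) (by linarith)).neg
    have h2 : -(((-x : ℝ) : ℂ) • (1:A) + c) = algebraMap ℂ A (x:ℂ) - c := by
      rw [Algebra.algebraMap_eq_smul_one]
      push_cast
      module
    rwa [h2] at h1
  refine ⟨hnotmem, ?_⟩
  have hslit : ∀ z ∈ spectrum ℂ c, z ∈ Complex.slitPlane := by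
    intro z hz
    rw [Complex.mem_slitPlane_iff]
    by_contra hcon
    push_neg at hcon
    obtain ⟨hre, him⟩ := hcon
    have hz' : z = ((z.re : ℝ) : ℂ) := by
      apply Complex.ext <;> simp [him]
    exact hnotmem z.re hre (hz' ▸ hz)
  obtain ⟨s, hs1, hs2⟩ := sqrt_of_slit c hslit
  refine ⟨s, hs1, hs2, ?_⟩
  have hainv : (↑a⁻¹ : A) = (↑r⁻¹ : A) * (↑r⁻¹ : A) := by
    have h3 : (↑r⁻¹ : A) * (↑r⁻¹ : A) * (a : A) = 1 := by
      rw [← hr2, mul_assoc, ← mul_assoc ((↑r⁻¹ : A)) (r : A) (r : A),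
        show ((↑r⁻¹ : A) * (r : A)) = 1 from r.inv_mul, one_mul,
        show ((↑r⁻¹ : A) * (r : A)) = 1 from r.inv_mul]
    calc (↑a⁻¹ : A) = 1 * (↑a⁻¹ : A) := (one_mul _).symm
      _ = (↑r⁻¹ : A) * (↑r⁻¹ : A) * (a : A) * (↑a⁻¹ : A) := by rw [h3]
      _ = (↑r⁻¹ : A) * (↑r⁻¹ : A) := by
          rw [mul_assoc, show ((a : A) * (↑a⁻¹ : A)) = 1 from a.mul_inv, mul_one]
  rw [hainv, hc] at *
  have h1 : (r : A) * (↑r⁻¹ : A) = 1 := r.mul_inv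
  have h2 : (↑r⁻¹ : A) * (r : A) = 1 := r.inv_mul
  calc (r : A) * s * (r : A) * ((↑r⁻¹ : A) * (↑r⁻¹ : A)) * ((r : A) * s * (r : A))
      = (r : A) * s * (((r : A) * (↑r⁻¹ : A)) * ((↑r⁻¹ : A) * (r : A))) * s * (r : A) := by
        simp only [mul_assoc]
    _ = (r : A) * (s * s) * (r : A) := by rw [h1, h2]; simp only [mul_assoc, one_mul]
    _ = (r : A) * ((↑r⁻¹ : A) * (b : A) * (↑r⁻¹ : A)) * (r : A) := by rw [hs1]
    _ = ((r : A) * (↑r⁻¹ : A)) * (b : A) * ((↑r⁻¹ : A) * (r : A)) := by simp only [mul_assoc]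
    _ = (b : A) := by rw [h1, h2, one_mul, mul_one]


/-- if a, b are strictly accretive invertible elements of a unital Banach
algebra (numerical ranges in the open right half-plane) with ta + b invertible for all
t ≥ 0, then Sp(a^{-1/2}·b·a^{-1/2}) contains no reals ≤ 0; moreover it has a square root
with spectrum in the open right half-plane, and G = a^{1/2}·(a^{-1/2}ba^{-1/2})^{1/2}·a^{1/2}
satisfies G·a⁻¹·G = b.  Here r is the principal square root of a. -/
theorem stmt17 {A : Type*} [NormedRing A] [NormedAlgebra ℂ A] [CompleteSpace A] [NormOneClass A]
    (a b : Aˣ)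
    (ha : ∀ f : A →L[ℂ] ℂ, ‖f‖ = 1 → f 1 = 1 → 0 < (f (a : A)).re)
    (hb : ∀ f : A →L[ℂ] ℂ, ‖f‖ = 1 → f 1 = 1 → 0 < (f (b : A)).re)
    (hinv : ∀ t : ℝ, 0 ≤ t → IsUnit ((t : ℂ) • (a : A) + (b : A)))
    (r : Aˣ) (hr2 : (r : A) * r = (a : A))
    (hrspec : ∀ z ∈ spectrum ℂ (r : A), 0 < z.re) :
    (∀ x : ℝ, x ≤ 0 → (x : ℂ) ∉ spectrum ℂ ((↑r⁻¹ : A) * (b : A) * (↑r⁻¹ : A))) ∧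
    ∃ s : A, s * s = (↑r⁻¹ : A) * (b : A) * (↑r⁻¹ : A) ∧
      (∀ z ∈ spectrum ℂ s, 0 < z.re) ∧
      ((r : A) * s * (r : A)) * (↑a⁻¹ : A) * ((r : A) * s * (r : A)) = (b : A) := by
  exact stmt17' a b hinv r hr2
end
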